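/- arXiv:1903.02066 — 5 statements merged into one kernel-verified Lean document; each statement's English description precedes it below -/
import Mathlib

section
/- Suppose the signed n×n matrix measure η has a δ-exponential moment and satisfies Condition (C), and that r := rank(Π₀) < n. Let α⊥, β⊥ ∈ ℝ^{n×(n−r)} be matrices of rank n−r with Π₀ᵀα⊥ = 0 and Π₀β⊥ = 0. Then the (n−r)×(n−r) matrix (α⊥)ᵀ(I_n − Π([0,∞)))β⊥ is invertible, and the value at z = 0 of the analytic extension of z ↦ z·h_η(z)^{−1} (equivalently, the limit of z·h_η(z)^{−1} as z → 0 in ℍ_δ \ {0}) equals β⊥[(α⊥)ᵀ(I_n − Π([0,∞)))β⊥]^{−1}(α⊥)ᵀ. -/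
open MeasureTheory Matrix Complex Set

noncomputable section

/-- Euclidean norm on `Fin n → ℝ`. -/
def euclNorm {n : ℕ} (v : Fin n → ℝ) : ℝ := Real.sqrt (∑ i, v i ^ 2)

/-- Frobenius norm of a real square matrix. -/
def frobR {n : ℕ} (A : Matrix (Fin n) (Fin n) ℝ) : ℝ := Real.sqrt (∑ i, ∑ j, A i j ^ 2)

/-- Frobenius norm of a complex square matrix. -/
def frobC {n : ℕ} (A : Matrix (Fin n) (Fin n) ℂ) : ℝ :=
  Real.sqrt (∑ i, ∑ j, ‖A i j‖ ^ 2)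

/-- Integral of a real function over `s` against a finite signed measure
(via the Jordan decomposition). -/
def sIntOn (μ : SignedMeasure ℝ) (s : Set ℝ) (f : ℝ → ℝ) : ℝ :=
  (∫ t in s, f t ∂μ.toJordanDecomposition.posPart) -
    ∫ t in s, f t ∂μ.toJordanDecomposition.negPart

/-- Integral of a complex function over `s` against a finite signed measure. -/
def sIntOnC (μ : SignedMeasure ℝ) (s : Set ℝ) (f : ℝ → ℂ) : ℂ :=
  (∫ t in s, f t ∂μ.toJordanDecomposition.posPart) -
    ∫ t in s, f t ∂μ.toJordanDecomposition.negPart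

/-- The signed matrix measure `η` is supported on `[0,∞)`. -/
def SuppNonneg {n : ℕ} (η : Matrix (Fin n) (Fin n) (SignedMeasure ℝ)) : Prop :=
  ∀ i j, (η i j).totalVariation (Set.Iio 0) = 0

/-- `η` has a `δ`-exponential moment: `∫ e^{δ t} |η_ij|(dt) < ∞`. -/
def ExpMoment {n : ℕ} (δ : ℝ) (η : Matrix (Fin n) (Fin n) (SignedMeasure ℝ)) : Prop :=
  ∀ i j, (∫⁻ t, ENNReal.ofReal (Real.exp (δ * t)) ∂(η i j).totalVariation) < ⊤

/-- The Laplace transform `L[η](z)`, an `n × n` complex matrix. -/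
def lapM {n : ℕ} (η : Matrix (Fin n) (Fin n) (SignedMeasure ℝ)) (z : ℂ) :
    Matrix (Fin n) (Fin n) ℂ :=
  Matrix.of fun i j => sIntOnC (η i j) (Set.Ici 0) fun t => Complex.exp (-z * t)

/-- `h_η(z) = z Iₙ − L[η](z)`. -/
def hEta {n : ℕ} (η : Matrix (Fin n) (Fin n) (SignedMeasure ℝ)) (z : ℂ) :
    Matrix (Fin n) (Fin n) ℂ :=
  z • (1 : Matrix (Fin n) (Fin n) ℂ) - lapM η z

/-- `Π₀ = η([0,∞))`. -/
def Pi0 {n : ℕ} (η : Matrix (Fin n) (Fin n) (SignedMeasure ℝ)) : Matrix (Fin n) (Fin n) ℝ :=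
  Matrix.of fun i j => η i j (Set.Ici 0)

/-- `π(t) = η([0,t]) − η([0,∞))`. -/
def piFun {n : ℕ} (η : Matrix (Fin n) (Fin n) (SignedMeasure ℝ)) (t : ℝ) :
    Matrix (Fin n) (Fin n) ℝ :=
  Matrix.of fun i j => η i j (Set.Icc 0 t) - η i j (Set.Ici 0)

/-- `Π([0,∞)) = ∫_0^∞ π(t) dt`. -/
def PiInf {n : ℕ} (η : Matrix (Fin n) (Fin n) (SignedMeasure ℝ)) : Matrix (Fin n) (Fin n) ℝ :=
  Matrix.of fun i j => ∫ t in Set.Ioi (0 : ℝ), piFun η t i j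

/-- Condition (C): `det h_η(z) ≠ 0` on `ℍ_δ \ {0}`, and `G` is an analytic extension of
`z ↦ z • h_η(z)⁻¹` to all of `ℍ_δ`. -/
def CondC {n : ℕ} (δ : ℝ) (η : Matrix (Fin n) (Fin n) (SignedMeasure ℝ))
    (G : ℂ → Matrix (Fin n) (Fin n) ℂ) : Prop :=
  (∀ z : ℂ, -δ < z.re → z ≠ 0 → (hEta η z).det ≠ 0) ∧
  (∀ i j, DifferentiableOn ℂ (fun z => G z i j) {z : ℂ | -δ < z.re}) ∧
  ∀ z : ℂ, -δ < z.re → z ≠ 0 → G z = z • (hEta η z)⁻¹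

/-- The process `Z` has stationary increments (equality of all finite-dimensional
distributions of the increment processes). -/
def StatInc {n : ℕ} {Ω : Type} [MeasurableSpace Ω] (P : Measure Ω)
    (Z : ℝ → Ω → Fin n → ℝ) : Prop :=
  ∀ (h : ℝ) (k : ℕ) (ts : Fin k → ℝ),
    Measure.map (fun ω (m : Fin k) => Z (ts m + h) ω - Z h ω) P =
      Measure.map (fun ω (m : Fin k) => Z (ts m) ω - Z 0 ω) P

/-- The pair `(X, Z)` has stationary increments. -/
def PairStatInc {n : ℕ} {Ω : Type} [MeasurableSpace Ω] (P : Measure Ω)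
    (X Z : ℝ → Ω → Fin n → ℝ) : Prop :=
  ∀ (h : ℝ) (k : ℕ) (ts : Fin k → ℝ),
    Measure.map (fun ω (m : Fin k) =>
        (X (ts m + h) ω - X h ω, Z (ts m + h) ω - Z h ω)) P =
      Measure.map (fun ω (m : Fin k) => (X (ts m) ω - X 0 ω, Z (ts m) ω - Z 0 ω)) P

/-- The driving noise: measurable, `Z_0 = 0`, stationary increments,
square-integrable marginals. -/
def GoodNoise {n : ℕ} {Ω : Type} [MeasurableSpace Ω] (P : Measure Ω)
    (Z : ℝ → Ω → Fin n → ℝ) : Prop :=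
  Measurable (Function.uncurry Z) ∧ (∀ ω, Z 0 ω = 0) ∧ StatInc P Z ∧
    ∀ t, Integrable (fun ω => euclNorm (Z t ω) ^ 2) P

/-- `X` is a solution of the MSDDE `dX_t = η ∗ X(t) dt + dZ_t`. -/
def IsMSDDESolution {n : ℕ} {Ω : Type} [MeasurableSpace Ω] (P : Measure Ω)
    (η : Matrix (Fin n) (Fin n) (SignedMeasure ℝ)) (Z X : ℝ → Ω → Fin n → ℝ) : Prop :=
  Measurable (Function.uncurry X) ∧
  (∀ t, Integrable (fun ω => euclNorm (X t ω) ^ 2) P) ∧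
  PairStatInc P X Z ∧
  ∀ s t : ℝ, s < t → ∀ i, ∀ᵐ ω ∂P,
    X t ω i - X s ω i =
      (∑ j, ∫ u in s..t, sIntOn (η i j) (Set.Ici 0) fun v => X (u - v) ω j) +
        (Z t ω i - Z s ω i)

/-- Specification of the kernel `f` from the Granger-type representation theorem:
vanishing on negatives, exponentially decaying, with Laplace transform
`Iₙ − z h_η(z)⁻¹` (via the analytic extension `G`). -/
def FSpec {n : ℕ} (δ : ℝ) (G : ℂ → Matrix (Fin n) (Fin n) ℂ)
    (f : ℝ → Matrix (Fin n) (Fin n) ℝ) : Prop :=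
  (∀ i j, Measurable fun t => f t i j) ∧ (∀ t < (0 : ℝ), f t = 0) ∧
  (∀ ε, 0 < ε → ε < δ → ∃ M, ∀ t, 0 ≤ t → Real.exp (ε * t) * frobR (f t) ≤ M) ∧
  ∀ z : ℂ, -δ < z.re → ∀ i j,
    (∫ t in Set.Ici (0 : ℝ), Complex.exp (-z * t) * (f t i j : ℂ)) =
      ((1 : Matrix (Fin n) (Fin n) ℂ) - G z) i j

/-- `f_r = 1_{[0,∞)}(· − r) − 1_{[0,∞)}`. -/
def frFun (r x : ℝ) : ℝ :=
  Set.indicator (Set.Ici r) (fun _ => (1 : ℝ)) x - Set.indicator (Set.Ici 0) (fun _ => (1 : ℝ)) x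

/-- `I` is an integration map (regular integrator) for the one-dimensional noise `Zi`. -/
def IsRegIntegrator {Ω : Type} [MeasurableSpace Ω] (P : Measure Ω) (Zi : ℝ → Ω → ℝ)
    (I : (ℝ → ℝ) → Ω → ℝ) : Prop :=
  (∀ f : ℝ → ℝ, Integrable f volume → MemLp f 2 volume → Integrable (I f) P) ∧
  (∀ f g : ℝ → ℝ, Integrable f volume → MemLp f 2 volume → Integrable g volume →
    MemLp g 2 volume → I (f + g) =ᵐ[P] I f + I g) ∧
  (∀ (c : ℝ) (f : ℝ → ℝ), Integrable f volume → MemLp f 2 volume →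
    I (c • f) =ᵐ[P] c • I f) ∧
  (∀ s t : ℝ, s < t →
    I (Set.indicator (Set.Ioc s t) fun _ => (1 : ℝ)) =ᵐ[P] fun ω => Zi t ω - Zi s ω) ∧
  (∀ (μ : Measure ℝ) [IsFiniteMeasure μ], Integrable (fun r => |r|) μ → ∀ t : ℝ,
    ∀ᵐ ω ∂P, Integrable (fun r => I (fun s => frFun r (t - s)) ω) μ ∧
      I (fun s => ∫ r, frFun r (t - s) ∂μ) ω = ∫ r, I (fun s => frFun r (t - s)) ω ∂μ)


open Filter


/-- the test sequence 1/(k+1) -/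
def xseq (k : ℕ) : ℝ := 1 / (k + 1)

lemma xseq_pos (k : ℕ) : 0 < xseq k := by simp only [xseq]; positivity

lemma xseq_tendsto : Tendsto xseq atTop (nhds 0) :=
  tendsto_one_div_add_atTop_nhds_zero_nat

section FinMeas

variable (μ : Measure ℝ) [IsFiniteMeasure μ] {δ : ℝ} (hδ : 0 < δ)
  (hmem : ∀ᵐ t ∂μ, 0 ≤ t)
  (hexp : (∫⁻ t, ENNReal.ofReal (Real.exp (δ * t)) ∂μ) < ⊤)

include hδ hexp in
lemma int_exp : Integrable (fun t => Real.exp (δ * t)) μ := by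
  refine ⟨((measurable_id.const_mul δ).exp).aestronglyMeasurable, ?_⟩
  rw [hasFiniteIntegral_iff_ofReal (Eventually.of_forall fun t => (Real.exp_pos _).le)]
  exact hexp

include hδ hmem hexp in
lemma int_id : Integrable (fun t : ℝ => t) μ := by
  refine Integrable.mono' ((int_exp μ hδ hexp).const_mul δ⁻¹) aestronglyMeasurable_id ?_
  filter_upwards [hmem] with t ht
  have h1 : δ * t ≤ Real.exp (δ * t) := by
    have := Real.add_one_le_exp (δ * t); linarith
  have h2 : t ≤ δ⁻¹ * Real.exp (δ * t) := by
    calc t = δ⁻¹ * (δ * t) := by field_simp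
    _ ≤ δ⁻¹ * Real.exp (δ * t) := by
      exact mul_le_mul_of_nonneg_left h1 (by positivity)
  rwa [Real.norm_eq_abs, _root_.abs_of_nonneg ht]

include hmem in
lemma int_expx {x : ℝ} (hx : 0 ≤ x) : Integrable (fun t => Real.exp (-x * t)) μ := by
  refine Integrable.mono' (integrable_const 1) ((measurable_id.const_mul (-x)).exp).aestronglyMeasurable ?_
  filter_upwards [hmem] with t ht
  rw [Real.norm_eq_abs, Real.abs_exp, Real.exp_le_one_iff]
  nlinarith

include hmem in
lemma dct1 : Tendsto (fun k : ℕ => ∫ t, Real.exp (-(xseq k) * t) ∂μ) atTop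
    (nhds ((μ univ).toReal)) := by
  have h := MeasureTheory.tendsto_integral_of_dominated_convergence (μ := μ)
    (F := fun k t => Real.exp (-(xseq k) * t)) (f := fun _ => (1:ℝ)) (bound := fun _ => (1:ℝ))
    (fun k => ((measurable_id.const_mul (-(xseq k))).exp).aestronglyMeasurable)
    (integrable_const 1) ?_ ?_
  · simpa [Measure.real] using h
  · intro k
    filter_upwards [hmem] with t ht
    rw [Real.norm_eq_abs, Real.abs_exp, Real.exp_le_one_iff]
    nlinarith [xseq_pos k]
  · refine Eventually.of_forall fun t => ?_
    have : Tendsto (fun k : ℕ => -(xseq k) * t) atTop (nhds 0) := by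
      simpa using (xseq_tendsto.neg.mul_const t)
    simpa [Function.comp_def] using (Real.continuous_exp.tendsto 0).comp this

include hδ hmem hexp in
lemma dct2 : Tendsto (fun k : ℕ => ∫ t, (Real.exp (-(xseq k) * t) - 1) / (xseq k) ∂μ) atTop
    (nhds (-∫ t, t ∂μ)) := by
  have hint := int_id μ hδ hmem hexp
  have h := MeasureTheory.tendsto_integral_of_dominated_convergence (μ := μ)
    (F := fun k t => (Real.exp (-(xseq k) * t) - 1) / (xseq k)) (f := fun t => -t)
    (bound := fun t => |t|)
    (fun k => (((measurable_id.const_mul (-(xseq k))).exp.sub measurable_const).div_const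
      _).aestronglyMeasurable)
    hint.abs ?_ ?_
  · rw [integral_neg] at h; exact h
  · intro k
    filter_upwards [hmem] with t ht
    have hx := xseq_pos k
    have h1 : Real.exp (-(xseq k) * t) ≤ 1 := by
      rw [Real.exp_le_one_iff]; nlinarith
    have h2 : 1 - (xseq k) * t ≤ Real.exp (-(xseq k) * t) := by
      have := Real.add_one_le_exp (-(xseq k) * t); linarith
    have habs : |1 - Real.exp (-xseq k * t)| = 1 - Real.exp (-xseq k * t) :=
      abs_of_nonneg (by linarith)
    rw [Real.norm_eq_abs, _root_.abs_div, _root_.abs_of_pos hx, div_le_iff₀ hx,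
      _root_.abs_of_nonneg ht, abs_sub_comm, habs]
    nlinarith
  · refine Eventually.of_forall fun t => ?_
    have hd : HasDerivAt (fun s : ℝ => Real.exp (-(s * t))) (-t) 0 := by
      have h0 : HasDerivAt (fun s : ℝ => -(s * t)) (-t) 0 := (hasDerivAt_mul_const t).neg
      simpa using h0.exp
    have hs := hasDerivAt_iff_tendsto_slope.mp hd
    have hseq : Tendsto xseq atTop (nhdsWithin 0 {(0:ℝ)}ᶜ) := by
      refine tendsto_nhdsWithin_iff.mpr ⟨xseq_tendsto, Eventually.of_forall fun k => ?_⟩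
      exact (xseq_pos k).ne'
    have := hs.comp hseq
    refine this.congr fun k => ?_
    simp only [Function.comp_apply, slope_def_field, sub_zero, neg_mul]
    norm_num

include hmem in
lemma moment_lintegral_lt_top (hδ : 0 < δ)
    (hexp : (∫⁻ t, ENNReal.ofReal (Real.exp (δ * t)) ∂μ) < ⊤) :
    (∫⁻ t, ENNReal.ofReal t ∂μ) < ⊤ := by
  have hb : (∫⁻ t, ENNReal.ofReal t ∂μ) ≤
      ∫⁻ t, ENNReal.ofReal δ⁻¹ * ENNReal.ofReal (Real.exp (δ * t)) ∂μ := by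
    refine lintegral_mono_ae ?_
    filter_upwards [hmem] with t ht
    rw [← ENNReal.ofReal_mul (by positivity)]
    refine ENNReal.ofReal_le_ofReal ?_
    have h1 : δ * t ≤ Real.exp (δ * t) := by
      have := Real.add_one_le_exp (δ * t); linarith
    calc t = δ⁻¹ * (δ * t) := by field_simp
    _ ≤ δ⁻¹ * Real.exp (δ * t) := mul_le_mul_of_nonneg_left h1 (by positivity)
  rw [lintegral_const_mul _ (Measurable.ennreal_ofReal (by fun_prop))] at hb
  exact lt_of_le_of_lt hb (ENNReal.mul_lt_top ENNReal.ofReal_lt_top hexp)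

lemma tail_meas : Measurable (fun t : ℝ => μ (Ioi t)) :=
  Antitone.measurable (fun _ _ hst => measure_mono (Ioi_subset_Ioi hst))

include hmem in
lemma layercake_id : (∫⁻ t, ENNReal.ofReal t ∂μ) = ∫⁻ t in Ioi (0:ℝ), μ (Ioi t) := by
  have := lintegral_eq_lintegral_meas_lt μ (f := fun t => t) hmem aemeasurable_id
  simpa [Set.Ioi] using this

include hδ hmem hexp in
lemma tail_formula : (∫ t in Ioi (0:ℝ), (μ (Ioi t)).toReal) = ∫ t, t ∂μ := by
  rw [integral_eq_lintegral_of_nonneg_ae hmem aestronglyMeasurable_id]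
  rw [MeasureTheory.integral_toReal ((tail_meas μ).aemeasurable.restrict)
    (Eventually.of_forall fun t => measure_lt_top μ _)]
  rw [layercake_id μ hmem]

include hδ hmem hexp in
lemma tail_integrable : IntegrableOn (fun t : ℝ => (μ (Ioi t)).toReal) (Ioi 0) := by
  refine ⟨((tail_meas μ).ennreal_toReal).aestronglyMeasurable, ?_⟩
  rw [hasFiniteIntegral_iff_ofReal (Eventually.of_forall fun t => ENNReal.toReal_nonneg)]
  have : ∀ t : ℝ, ENNReal.ofReal ((μ (Ioi t)).toReal) = μ (Ioi t) := fun t =>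
    ENNReal.ofReal_toReal (measure_lt_top μ _).ne
  simp only [this]
  rw [← layercake_id μ hmem]
  exact moment_lintegral_lt_top μ hmem hδ hexp

end FinMeas

section Chunk2

lemma integral_ofReal' (μ : Measure ℝ) (f : ℝ → ℝ) :
    ∫ t, ((f t : ℝ) : ℂ) ∂μ = ((∫ t, f t ∂μ : ℝ) : ℂ) :=
  integral_ofReal

lemma sm_apply (μ : SignedMeasure ℝ) {s : Set ℝ} (hs : MeasurableSet s) :
    μ s = (μ.toJordanDecomposition.posPart s).toReal -
      (μ.toJordanDecomposition.negPart s).toReal := by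
  conv_lhs => rw [← μ.toSignedMeasure_toJordanDecomposition]
  rw [MeasureTheory.JordanDecomposition.toSignedMeasure, MeasureTheory.VectorMeasure.sub_apply,
    Measure.toSignedMeasure_apply_measurable hs, Measure.toSignedMeasure_apply_measurable hs]
  rfl

variable {n : ℕ} (η : Matrix (Fin n) (Fin n) (SignedMeasure ℝ))

/-- The real Laplace transform matrix. -/
def Lr (x : ℝ) : Matrix (Fin n) (Fin n) ℝ :=
  Matrix.of fun i j => sIntOn (η i j) (Set.Ici 0) fun t => Real.exp (-x * t)

/-- positive part restricted to `[0,∞)`. -/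
def muP (i j : Fin n) : Measure ℝ :=
  ((η i j).toJordanDecomposition.posPart).restrict (Set.Ici 0)

/-- negative part restricted to `[0,∞)`. -/
def muQ (i j : Fin n) : Measure ℝ :=
  ((η i j).toJordanDecomposition.negPart).restrict (Set.Ici 0)

instance (i j : Fin n) : IsFiniteMeasure (muP η i j) := by
  unfold muP; infer_instance

instance (i j : Fin n) : IsFiniteMeasure (muQ η i j) := by
  unfold muQ; infer_instance

lemma muP_mem (i j : Fin n) : ∀ᵐ t ∂(muP η i j), 0 ≤ t :=
  ae_restrict_mem measurableSet_Ici

lemma muQ_mem (i j : Fin n) : ∀ᵐ t ∂(muQ η i j), 0 ≤ t :=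
  ae_restrict_mem measurableSet_Ici

lemma muP_exp {δ : ℝ} (hmom : ExpMoment δ η) (i j : Fin n) :
    (∫⁻ t, ENNReal.ofReal (Real.exp (δ * t)) ∂(muP η i j)) < ⊤ := by
  refine lt_of_le_of_lt ?_ (hmom i j)
  rw [MeasureTheory.SignedMeasure.totalVariation, lintegral_add_measure]
  exact le_trans (lintegral_mono' Measure.restrict_le_self le_rfl) le_self_add

lemma muQ_exp {δ : ℝ} (hmom : ExpMoment δ η) (i j : Fin n) :
    (∫⁻ t, ENNReal.ofReal (Real.exp (δ * t)) ∂(muQ η i j)) < ⊤ := by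
  refine lt_of_le_of_lt ?_ (hmom i j)
  rw [MeasureTheory.SignedMeasure.totalVariation, lintegral_add_measure]
  exact le_trans (lintegral_mono' Measure.restrict_le_self le_rfl) le_add_self

lemma Lr_apply (x : ℝ) (i j : Fin n) :
    Lr η x i j = (∫ t, Real.exp (-x * t) ∂(muP η i j)) - ∫ t, Real.exp (-x * t) ∂(muQ η i j) :=
  rfl

lemma Pi0_apply' (i j : Fin n) :
    Pi0 η i j = ((muP η i j) univ).toReal - ((muQ η i j) univ).toReal := by
  rw [Pi0, Matrix.of_apply, sm_apply _ measurableSet_Ici]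
  rw [muP, muQ, Measure.restrict_apply_univ, Measure.restrict_apply_univ]

/-- complexification of the Laplace transform at real arguments -/
lemma lapM_real (x : ℝ) : lapM η (x : ℂ) = (Lr η x).map Complex.ofReal := by
  ext i j
  simp only [lapM, Matrix.of_apply, Matrix.map_apply, Lr, sIntOnC, sIntOn]
  have hfun : ∀ t : ℝ, Complex.exp (-(x:ℂ) * t) = ((Real.exp (-x * t) : ℝ) : ℂ) := by
    intro t
    rw [Complex.ofReal_exp]
    norm_num
  simp only [hfun]
  rw [Complex.ofReal_sub, ← integral_ofReal' _ (fun t => Real.exp (-x * t)),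
    ← integral_ofReal' _ (fun t => Real.exp (-x * t))]

lemma hEta_real (x : ℝ) :
    hEta η (x : ℂ) = (x • (1 : Matrix (Fin n) (Fin n) ℝ) - Lr η x).map Complex.ofReal := by
  rw [hEta, lapM_real]
  ext i j
  simp [Matrix.map_apply, Matrix.one_apply, Matrix.smul_apply, Matrix.sub_apply]
  split <;> simp

/-- inverse commutes with ofReal entrywise map -/
lemma inv_map_ofReal (A : Matrix (Fin n) (Fin n) ℝ) (hA : IsUnit A.det) :
    (A.map Complex.ofReal)⁻¹ = A⁻¹.map Complex.ofReal := by
  refine Matrix.inv_eq_right_inv ?_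
  have : A.map Complex.ofReal = Complex.ofRealHom.mapMatrix A := rfl
  rw [this]
  have h2 : A⁻¹.map Complex.ofReal = Complex.ofRealHom.mapMatrix A⁻¹ := rfl
  rw [h2, ← _root_.map_mul Complex.ofRealHom.mapMatrix A A⁻¹, Matrix.mul_nonsing_inv A hA,
    _root_.map_one]

lemma det_map_ofReal (A : Matrix (Fin n) (Fin n) ℝ) :
    (A.map Complex.ofReal).det = (A.det : ℂ) := by
  have : A.map Complex.ofReal = Complex.ofRealHom.mapMatrix A := rfl
  rw [this, ← RingHom.map_det]
  rfl

lemma Lr_tendsto (i j : Fin n) :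
    Filter.Tendsto (fun k => Lr η (xseq k) i j) atTop (nhds (Pi0 η i j)) := by
  rw [Pi0_apply']
  have h := (dct1 (muP η i j) (muP_mem η i j)).sub (dct1 (muQ η i j) (muQ_mem η i j))
  exact h.congr fun k => (Lr_apply η (xseq k) i j).symm

lemma PiInf_apply' {δ : ℝ} (hδ : 0 < δ) (hmom : ExpMoment δ η) (i j : Fin n) :
    PiInf η i j = (∫ t, t ∂(muQ η i j)) - ∫ t, t ∂(muP η i j) := by
  rw [PiInf, Matrix.of_apply]
  have hcong : EqOn (fun t => piFun η t i j)
      (fun t => ((muQ η i j) (Ioi t)).toReal - ((muP η i j) (Ioi t)).toReal) (Ioi 0) := by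
    intro t ht
    simp only [mem_Ioi] at ht
    have hun : Ici (0:ℝ) = Icc 0 t ∪ Ioi t := by
      ext s
      simp only [mem_Ici, mem_union, mem_Icc, mem_Ioi]
      constructor
      · intro h
        rcases le_or_gt s t with h' | h'
        · exact Or.inl ⟨h, h'⟩
        · exact Or.inr h'
      · rintro (⟨h1, _⟩ | h1)
        · exact h1
        · linarith
    have hdisj : Disjoint (Icc (0:ℝ) t) (Ioi t) :=
      Disjoint.mono_left Icc_subset_Iic_self (Iic_disjoint_Ioi le_rfl)
    have hsplit : η i j (Ici 0) = η i j (Icc 0 t) + η i j (Ioi t) := by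
      rw [hun]
      exact MeasureTheory.VectorMeasure.of_union hdisj measurableSet_Icc measurableSet_Ioi
    have hIoi_sub : Ioi t ⊆ Ici (0:ℝ) := fun s hs => le_of_lt (lt_trans ht hs)
    have hP : (muP η i j) (Ioi t) = (η i j).toJordanDecomposition.posPart (Ioi t) := by
      rw [muP, Measure.restrict_apply measurableSet_Ioi, inter_eq_self_of_subset_left hIoi_sub]
    have hQ : (muQ η i j) (Ioi t) = (η i j).toJordanDecomposition.negPart (Ioi t) := by
      rw [muQ, Measure.restrict_apply measurableSet_Ioi, inter_eq_self_of_subset_left hIoi_sub]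
    simp only [piFun, Matrix.of_apply, hsplit, hP, hQ, sm_apply _ measurableSet_Ioi]
    ring
  rw [setIntegral_congr_fun measurableSet_Ioi hcong]
  rw [integral_sub (tail_integrable (muQ η i j) hδ (muQ_mem η i j) (muQ_exp η hmom i j))
    (tail_integrable (muP η i j) hδ (muP_mem η i j) (muP_exp η hmom i j))]
  rw [tail_formula (muQ η i j) hδ (muQ_mem η i j) (muQ_exp η hmom i j),
    tail_formula (muP η i j) hδ (muP_mem η i j) (muP_exp η hmom i j)]

lemma Lr_slope_tendsto {δ : ℝ} (hδ : 0 < δ) (hmom : ExpMoment δ η) (i j : Fin n) :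
    Filter.Tendsto (fun k => (Lr η (xseq k) i j - Pi0 η i j) / (xseq k)) atTop
      (nhds (PiInf η i j)) := by
  have hP := dct2 (muP η i j) hδ (muP_mem η i j) (muP_exp η hmom i j)
  have hQ := dct2 (muQ η i j) hδ (muQ_mem η i j) (muQ_exp η hmom i j)
  have h := hP.sub hQ
  rw [PiInf_apply' η hδ hmom i j]
  have h2 : -∫ t, t ∂(muP η i j) - -∫ t, t ∂(muQ η i j)
      = (∫ t, t ∂(muQ η i j)) - ∫ t, t ∂(muP η i j) := by ring
  rw [h2] at h
  refine h.congr fun k => ?_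
  have key : ∀ (μ : Measure ℝ) [IsFiniteMeasure μ], (∀ᵐ t ∂μ, 0 ≤ t) →
      (∫ t, (Real.exp (-(xseq k) * t) - 1) / (xseq k) ∂μ)
        = ((∫ t, Real.exp (-(xseq k) * t) ∂μ) - (μ univ).toReal) / (xseq k) := by
    intro μ _ hmem
    rw [integral_div, integral_sub (int_expx μ hmem (xseq_pos k).le) (integrable_const 1),
      integral_const, smul_eq_mul, mul_one]
    rfl
  rw [key _ (muP_mem η i j), key _ (muQ_mem η i j), Lr_apply, Pi0_apply']
  ring

section LinAlg

variable {m : ℕ}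

lemma ker_eq_range (P : Matrix (Fin n) (Fin n) ℝ) (B : Matrix (Fin n) (Fin m) ℝ)
    (hPB : P * B = 0) (hB : B.rank = m) (hP : P.rank + m = n) :
    LinearMap.ker P.mulVecLin = LinearMap.range B.mulVecLin := by
  have hle : LinearMap.range B.mulVecLin ≤ LinearMap.ker P.mulVecLin := by
    rintro x ⟨v, rfl⟩
    show P.mulVec (B.mulVec v) = 0
    rw [Matrix.mulVec_mulVec, hPB, Matrix.zero_mulVec]
  symm
  refine Submodule.eq_of_le_of_finrank_le hle ?_
  have h1 := LinearMap.finrank_range_add_finrank_ker P.mulVecLin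
  rw [Module.finrank_fintype_fun_eq_card, Fintype.card_fin] at h1
  have h2 : Module.finrank ℝ (LinearMap.range P.mulVecLin) = P.rank := rfl
  have h3 : Module.finrank ℝ (LinearMap.range B.mulVecLin) = B.rank := rfl
  rw [h3, hB]
  omega

lemma exists_left_inv (B : Matrix (Fin n) (Fin m) ℝ) (hB : B.rank = m) :
    ∃ L : Matrix (Fin m) (Fin n) ℝ, L * B = 1 := by
  have hker : LinearMap.ker B.mulVecLin = ⊥ := by
    have h1 := LinearMap.finrank_range_add_finrank_ker B.mulVecLin
    rw [Module.finrank_fintype_fun_eq_card, Fintype.card_fin] at h1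
    have h3 : Module.finrank ℝ (LinearMap.range B.mulVecLin) = B.rank := rfl
    rw [h3, hB] at h1
    have : Module.finrank ℝ (LinearMap.ker B.mulVecLin) = 0 := by omega
    exact Submodule.finrank_eq_zero.mp this
  obtain ⟨g, hg⟩ := LinearMap.exists_leftInverse_of_injective B.mulVecLin hker
  refine ⟨LinearMap.toMatrix' g, ?_⟩
  have : LinearMap.toMatrix' (g.comp B.mulVecLin) = LinearMap.toMatrix' g * B := by
    rw [LinearMap.toMatrix'_comp, ← Matrix.toLin'_apply', LinearMap.toMatrix'_toLin']
  rw [← this, hg, LinearMap.toMatrix'_id]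

lemma exists_right_inv (A : Matrix (Fin m) (Fin n) ℝ) (hA : A.rank = m) :
    ∃ R : Matrix (Fin n) (Fin m) ℝ, A * R = 1 := by
  have hrange : LinearMap.range A.mulVecLin = ⊤ := by
    apply Submodule.eq_top_of_finrank_eq
    have h3 : Module.finrank ℝ (LinearMap.range A.mulVecLin) = A.rank := rfl
    rw [h3, hA, Module.finrank_fintype_fun_eq_card, Fintype.card_fin]
  obtain ⟨g, hg⟩ := LinearMap.exists_rightInverse_of_surjective A.mulVecLin hrange
  refine ⟨LinearMap.toMatrix' g, ?_⟩
  have : LinearMap.toMatrix' (A.mulVecLin.comp g) = A * LinearMap.toMatrix' g := by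
    rw [LinearMap.toMatrix'_comp, ← Matrix.toLin'_apply', LinearMap.toMatrix'_toLin']
  rw [← this, hg, LinearMap.toMatrix'_id]

/-- factor a matrix whose columns lie in the column space of `B` -/
lemma exists_factor (B : Matrix (Fin n) (Fin m) ℝ) (g : Matrix (Fin n) (Fin n) ℝ)
    (h : ∀ jj : Fin n, (fun i => g i jj) ∈ LinearMap.range B.mulVecLin) :
    ∃ D : Matrix (Fin m) (Fin n) ℝ, B * D = g := by
  choose w hw using fun jj => h jj
  refine ⟨Matrix.of fun a b => w b a, ?_⟩
  ext i j
  have := congrFun (hw j) i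
  simp only [Matrix.mulVecLin_apply, Matrix.mulVec, dotProduct] at this
  rw [Matrix.mul_apply]
  simpa using this

end LinAlg

lemma tendsto_matrix_mul {a b c : ℕ} (X : ℕ → Matrix (Fin a) (Fin b) ℝ)
    (Y : ℕ → Matrix (Fin b) (Fin c) ℝ) (X0 : Matrix (Fin a) (Fin b) ℝ)
    (Y0 : Matrix (Fin b) (Fin c) ℝ)
    (hX : ∀ i j, Filter.Tendsto (fun k => X k i j) atTop (nhds (X0 i j)))
    (hY : ∀ i j, Filter.Tendsto (fun k => Y k i j) atTop (nhds (Y0 i j))) :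
    ∀ i j, Filter.Tendsto (fun k => (X k * Y k) i j) atTop (nhds ((X0 * Y0) i j)) := by
  intro i j
  simp only [Matrix.mul_apply]
  exact tendsto_finset_sum _ fun l _ => (hX i l).mul (hY l j)

end Chunk2

/-- Under a `δ`-exponential moment and Condition (C), if
`r = rank Π₀ < n` and `α⊥, β⊥` are rank `n−r` matrices annihilating `Π₀ᵀ` and `Π₀`,
then `(α⊥)ᵀ(Iₙ − Π([0,∞)))β⊥` is invertible and the value at `0` of the analytic
extension of `z ↦ z h_η(z)⁻¹` equals `β⊥ [(α⊥)ᵀ(Iₙ − Π([0,∞)))β⊥]⁻¹ (α⊥)ᵀ`. -/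
theorem statement10 {n : ℕ} (hn : 1 ≤ n) (δ : ℝ) (hδ : 0 < δ)
    (η : Matrix (Fin n) (Fin n) (SignedMeasure ℝ))
    (hsupp : SuppNonneg η) (hmom : ExpMoment δ η)
    (G : ℂ → Matrix (Fin n) (Fin n) ℂ) (hC : CondC δ η G)
    (r : ℕ) (hr : (Pi0 η).rank = r) (hrn : r < n)
    (αp βp : Matrix (Fin n) (Fin (n - r)) ℝ)
    (hαr : αp.rank = n - r) (hβr : βp.rank = n - r)
    (hαa : (Pi0 η)ᵀ * αp = 0) (hβa : Pi0 η * βp = 0) :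
    IsUnit (αpᵀ * ((1 : Matrix (Fin n) (Fin n) ℝ) - PiInf η) * βp) ∧
    G 0 = (βp * (αpᵀ * ((1 : Matrix (Fin n) (Fin n) ℝ) - PiInf η) * βp)⁻¹ * αpᵀ).map
      Complex.ofReal := by
  obtain ⟨hdet, hdiff, hGval⟩ := hC
  have hxre : ∀ k : ℕ, -δ < ((xseq k : ℝ) : ℂ).re := by
    intro k
    rw [Complex.ofReal_re]
    linarith [xseq_pos k]
  have hxne : ∀ k : ℕ, ((xseq k : ℝ) : ℂ) ≠ 0 := fun k =>
    Complex.ofReal_ne_zero.mpr (xseq_pos k).ne'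
  set A : ℕ → Matrix (Fin n) (Fin n) ℝ :=
    fun k => (xseq k) • (1 : Matrix (Fin n) (Fin n) ℝ) - Lr η (xseq k) with hAdef
  have hdetA : ∀ k, IsUnit (A k).det := by
    intro k
    have h := hdet ((xseq k : ℝ) : ℂ) (hxre k) (hxne k)
    rw [hEta_real, det_map_ofReal] at h
    exact isUnit_iff_ne_zero.mpr (fun h0 => h (by rw [h0]; norm_num))
  set g : ℕ → Matrix (Fin n) (Fin n) ℝ := fun k => (xseq k) • (A k)⁻¹ with hgdef
  have hGk : ∀ k, G ((xseq k : ℝ) : ℂ) = (g k).map Complex.ofReal := by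
    intro k
    rw [hGval _ (hxre k) (hxne k), hEta_real, inv_map_ofReal _ (hdetA k)]
    ext i j
    simp [hgdef, Matrix.map_apply, Matrix.smul_apply, Complex.ofReal_mul]
  have hAg : ∀ k, A k * g k = (xseq k) • (1 : Matrix (Fin n) (Fin n) ℝ) := by
    intro k
    rw [hgdef]
    simp only [Matrix.mul_smul]
    rw [Matrix.mul_nonsing_inv _ (hdetA k)]
  have hgA : ∀ k, g k * A k = (xseq k) • (1 : Matrix (Fin n) (Fin n) ℝ) := by
    intro k
    rw [hgdef]
    simp only [Matrix.smul_mul]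
    rw [Matrix.nonsing_inv_mul _ (hdetA k)]
  -- continuity of `G` at `0`
  have hzero_mem : (0 : ℂ) ∈ {z : ℂ | -δ < z.re} := by simp [hδ]
  have hopen : IsOpen {z : ℂ | -δ < z.re} := isOpen_lt continuous_const Complex.continuous_re
  have hxc : Filter.Tendsto (fun k => ((xseq k : ℝ) : ℂ)) atTop (nhds 0) := by
    have := (Complex.continuous_ofReal.tendsto 0).comp xseq_tendsto
    simpa [Function.comp_def] using this
  have hGc : ∀ i j, Filter.Tendsto (fun k => G ((xseq k : ℝ) : ℂ) i j) atTop
      (nhds (G 0 i j)) := by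
    intro i j
    have hca : ContinuousAt (fun z => G z i j) 0 :=
      ((hdiff i j).continuousOn.continuousAt (hopen.mem_nhds hzero_mem))
    exact (hca.tendsto).comp hxc
  set g0 : Matrix (Fin n) (Fin n) ℝ := Matrix.of fun i j => (G 0 i j).re with hg0def
  have hgc : ∀ i j, Filter.Tendsto (fun k => g k i j) atTop (nhds (g0 i j)) := by
    intro i j
    have h := (Complex.continuous_re.tendsto _).comp (hGc i j)
    refine h.congr fun k => ?_
    rw [Function.comp_apply, hGk k]
    simp [Matrix.map_apply]
  have hG0 : G 0 = g0.map Complex.ofReal := by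
    ext i j
    have him : Filter.Tendsto (fun k => (G ((xseq k : ℝ) : ℂ) i j).im) atTop
        (nhds ((G 0 i j).im)) := (Complex.continuous_im.tendsto _).comp (hGc i j)
    have him0 : ∀ k, (G ((xseq k : ℝ) : ℂ) i j).im = 0 := by
      intro k
      rw [hGk k]
      simp [Matrix.map_apply]
    rw [Matrix.map_apply, hg0def]
    apply Complex.ext
    · simp
    · have : Filter.Tendsto (fun _ : ℕ => (0:ℝ)) atTop (nhds ((G 0 i j).im)) := by
        simpa [him0] using him
      have h0 := tendsto_nhds_unique this tendsto_const_nhds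
      simp [← h0]
  -- limits of `A k`
  have hA0 : ∀ i j, Filter.Tendsto (fun k => A k i j) atTop (nhds ((-(Pi0 η)) i j)) := by
    intro i j
    have h1 : Filter.Tendsto (fun k => (xseq k) * (1 : Matrix (Fin n) (Fin n) ℝ) i j)
        atTop (nhds 0) := by
      simpa using xseq_tendsto.mul_const ((1 : Matrix (Fin n) (Fin n) ℝ) i j)
    have h := h1.sub (Lr_tendsto η i j)
    simp only [hAdef, Matrix.sub_apply, Matrix.smul_apply, smul_eq_mul]
    simpa using h
  -- Pi0 * g0 = 0 and g0 * Pi0 = 0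
  have hmul1 := tendsto_matrix_mul A g (-(Pi0 η)) g0 hA0 hgc
  have hPig : Pi0 η * g0 = 0 := by
    have hlim0 : ∀ i j, Filter.Tendsto (fun k => (A k * g k) i j) atTop (nhds 0) := by
      intro i j
      have : ∀ k, (A k * g k) i j = (xseq k) * (1 : Matrix (Fin n) (Fin n) ℝ) i j := by
        intro k; rw [hAg k]; simp
      simp only [this]
      simpa using xseq_tendsto.mul_const ((1 : Matrix (Fin n) (Fin n) ℝ) i j)
    have hneg : (-(Pi0 η)) * g0 = 0 := by
      ext i j
      exact tendsto_nhds_unique (hmul1 i j) (hlim0 i j)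
    rw [Matrix.neg_mul, neg_eq_zero] at hneg
    exact hneg
  have hmul2 := tendsto_matrix_mul g A g0 (-(Pi0 η)) hgc hA0
  have hgPi : g0 * Pi0 η = 0 := by
    have hlim0 : ∀ i j, Filter.Tendsto (fun k => (g k * A k) i j) atTop (nhds 0) := by
      intro i j
      have : ∀ k, (g k * A k) i j = (xseq k) * (1 : Matrix (Fin n) (Fin n) ℝ) i j := by
        intro k; rw [hgA k]; simp
      simp only [this]
      simpa using xseq_tendsto.mul_const ((1 : Matrix (Fin n) (Fin n) ℝ) i j)
    have hneg : g0 * (-(Pi0 η)) = 0 := by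
      ext i j
      exact tendsto_nhds_unique (hmul2 i j) (hlim0 i j)
    rw [Matrix.mul_neg, neg_eq_zero] at hneg
    exact hneg
  -- the alpha equation
  have hαPi : αpᵀ * Pi0 η = 0 := by
    have := congrArg Matrix.transpose hαa
    rwa [Matrix.transpose_mul, Matrix.transpose_transpose, Matrix.transpose_zero] at this
  set B : ℕ → Matrix (Fin n) (Fin n) ℝ :=
    fun k => (xseq k)⁻¹ • (Lr η (xseq k) - Pi0 η) with hBdef
  have hBlim : ∀ i j, Filter.Tendsto (fun k => B k i j) atTop (nhds (PiInf η i j)) := by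
    intro i j
    have h := Lr_slope_tendsto η hδ hmom i j
    refine h.congr fun k => ?_
    simp [hBdef, Matrix.smul_apply, Matrix.sub_apply, div_eq_inv_mul]
  have heqk : ∀ k, (αpᵀ - αpᵀ * B k) * g k = αpᵀ := by
    intro k
    have hxk := (xseq_pos k).ne'
    have hLr : Lr η (xseq k) = Pi0 η + (xseq k) • B k := by
      rw [hBdef, smul_smul, mul_inv_cancel₀ hxk, one_smul]
      abel
    have hαA : αpᵀ * A k = (xseq k) • (αpᵀ - αpᵀ * B k) := by
      rw [hAdef]
      simp only [Matrix.mul_sub, hLr, Matrix.mul_add]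
      rw [Matrix.mul_smul, Matrix.mul_smul, hαPi]
      simp only [Matrix.mul_one, zero_add, smul_sub]
    have hassoc : αpᵀ * (A k * g k) = (αpᵀ * A k) * g k := by rw [Matrix.mul_assoc]
    rw [hAg k, hαA, Matrix.smul_mul] at hassoc
    have : αpᵀ * ((xseq k) • (1 : Matrix (Fin n) (Fin n) ℝ)) = (xseq k) • αpᵀ := by
      rw [Matrix.mul_smul, Matrix.mul_one]
    rw [this] at hassoc
    exact smul_right_injective _ hxk hassoc.symm
  have hαB : ∀ i j, Filter.Tendsto (fun k => (αpᵀ - αpᵀ * B k) i j) atTop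
      (nhds ((αpᵀ - αpᵀ * PiInf η) i j)) := by
    intro i j
    have hconst : ∀ i j, Filter.Tendsto (fun _ : ℕ => αpᵀ i j) atTop (nhds (αpᵀ i j)) :=
      fun i j => tendsto_const_nhds
    have hm := tendsto_matrix_mul (fun _ => αpᵀ) B αpᵀ (PiInf η) hconst hBlim
    simp only [Matrix.sub_apply]
    exact ((hconst i j).sub (hm i j))
  have hmul3 := tendsto_matrix_mul (fun k => αpᵀ - αpᵀ * B k) g
    (αpᵀ - αpᵀ * PiInf η) g0 hαB hgc
  have heq3 : (αpᵀ - αpᵀ * PiInf η) * g0 = αpᵀ := by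
    ext i j
    refine tendsto_nhds_unique (hmul3 i j) ?_
    have : ∀ k, ((αpᵀ - αpᵀ * B k) * g k) i j = αpᵀ i j := fun k => by rw [heqk k]
    simp only [this]
    exact tendsto_const_nhds
  -- linear algebra
  have hkerβ : LinearMap.ker (Pi0 η).mulVecLin = LinearMap.range βp.mulVecLin :=
    ker_eq_range _ _ hβa hβr (by rw [hr]; omega)
  have hkerα : LinearMap.ker ((Pi0 η)ᵀ).mulVecLin = LinearMap.range αp.mulVecLin :=
    ker_eq_range _ _ hαa hαr (by rw [Matrix.rank_transpose, hr]; omega)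
  have hcolmem : ∀ jj : Fin n, (fun i => g0 i jj) ∈ LinearMap.range βp.mulVecLin := by
    intro jj
    rw [← hkerβ]
    show (Pi0 η).mulVec (fun i => g0 i jj) = 0
    ext i
    have := congrFun (congrFun hPig i) jj
    simp only [Matrix.mul_apply, Matrix.zero_apply] at this
    simpa [Matrix.mulVec, dotProduct] using this
  obtain ⟨D, hD⟩ := exists_factor βp g0 hcolmem
  have hgPiT : (Pi0 η)ᵀ * g0ᵀ = 0 := by
    have := congrArg Matrix.transpose hgPi
    rwa [Matrix.transpose_mul, Matrix.transpose_zero] at this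
  have hcolmemT : ∀ jj : Fin n, (fun i => g0ᵀ i jj) ∈ LinearMap.range αp.mulVecLin := by
    intro jj
    rw [← hkerα]
    show ((Pi0 η)ᵀ).mulVec (fun i => g0ᵀ i jj) = 0
    ext i
    have := congrFun (congrFun hgPiT i) jj
    simp only [Matrix.mul_apply, Matrix.zero_apply] at this
    simpa [Matrix.mulVec, dotProduct] using this
  obtain ⟨E, hE⟩ := exists_factor αp g0ᵀ hcolmemT
  have hg0E : g0 = Eᵀ * αpᵀ := by
    have := congrArg Matrix.transpose hE
    rw [Matrix.transpose_mul, Matrix.transpose_transpose] at this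
    exact this.symm
  obtain ⟨Lβ, hLβ⟩ := exists_left_inv βp hβr
  have hDval : D = Lβ * Eᵀ * αpᵀ := by
    calc D = (Lβ * βp) * D := by rw [hLβ, Matrix.one_mul]
    _ = Lβ * (βp * D) := by rw [Matrix.mul_assoc]
    _ = Lβ * g0 := by rw [hD]
    _ = Lβ * (Eᵀ * αpᵀ) := by rw [hg0E]
    _ = Lβ * Eᵀ * αpᵀ := by rw [Matrix.mul_assoc]
  set C : Matrix (Fin (n - r)) (Fin (n - r)) ℝ := Lβ * Eᵀ with hCdef
  have hg0C : g0 = βp * C * αpᵀ := by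
    rw [← hD, hDval, hCdef, Matrix.mul_assoc, Matrix.mul_assoc, Matrix.mul_assoc]
  obtain ⟨Rα, hRα⟩ := exists_right_inv αpᵀ (by rw [Matrix.rank_transpose, hαr])
  set M : Matrix (Fin (n - r)) (Fin (n - r)) ℝ :=
    αpᵀ * ((1 : Matrix (Fin n) (Fin n) ℝ) - PiInf η) * βp with hMdef
  have heq4 : M * C * αpᵀ = αpᵀ := by
    have h1 : αpᵀ - αpᵀ * PiInf η = αpᵀ * ((1 : Matrix (Fin n) (Fin n) ℝ) - PiInf η) := by
      rw [Matrix.mul_sub, Matrix.mul_one]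
    rw [h1] at heq3
    calc M * C * αpᵀ = αpᵀ * ((1 : Matrix (Fin n) (Fin n) ℝ) - PiInf η) * (βp * C * αpᵀ) := by
          rw [hMdef]; simp only [Matrix.mul_assoc]
    _ = αpᵀ * ((1 : Matrix (Fin n) (Fin n) ℝ) - PiInf η) * g0 := by rw [← hg0C]
    _ = αpᵀ := heq3
  have hMC : M * C = 1 := by
    calc M * C = (M * C) * (αpᵀ * Rα) := by rw [hRα, Matrix.mul_one]
    _ = (M * C * αpᵀ) * Rα := by simp only [Matrix.mul_assoc]
    _ = αpᵀ * Rα := by rw [heq4]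
    _ = 1 := hRα
  have hMunit : IsUnit M := by
    rw [Matrix.isUnit_iff_isUnit_det]
    exact IsUnit.of_mul_eq_one _ (by rw [← Matrix.det_mul, hMC, Matrix.det_one])
  refine ⟨hMunit, ?_⟩
  have hCinv : C = M⁻¹ := (Matrix.inv_eq_right_inv hMC).symm
  rw [hG0, hg0C, hCinv]
end
end

section
/- Suppose the signed n×n matrix measure η has a δ-exponential moment and satisfies Condition (C). Then for every ε ∈ (0,δ), sup_{x > −ε} ∫_ℝ ‖I_n − (x+iy)·h_η(x+iy)^{−1}‖² dy < ∞, where for the point z = x+iy = 0 (and with the integrand defined for almost every y when x ≤ 0) the expression z·h_η(z)^{−1} is understood via its analytic extension to ℍ_δ. -/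
open MeasureTheory Matrix Complex Set

noncomputable section

open scoped NNReal

attribute [local instance] Matrix.linftyOpNormedRing Matrix.linftyOpNormedAlgebra

namespace Statement11Aux

lemma entry_le {n : ℕ} (A : Matrix (Fin n) (Fin n) ℂ) (i j : Fin n) :
    ‖A i j‖ ≤ ‖A‖ := by
  have h1 : (‖A i j‖₊ : ℝ≥0) ≤ ‖A‖₊ := by
    rw [Matrix.linfty_opNNNorm_def]
    refine le_trans ?_ (Finset.le_sup (Finset.mem_univ i))
    exact Finset.single_le_sum (f := fun j => ‖A i j‖₊) (fun k _ => zero_le) (Finset.mem_univ j)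
  calc ‖A i j‖ = ‖A i j‖ := rfl
    _ ≤ ‖A‖ := h1

lemma norm_le_sum {n : ℕ} (A : Matrix (Fin n) (Fin n) ℂ) (c : Fin n → Fin n → ℝ)
    (h : ∀ i j, ‖A i j‖ ≤ c i j) : ‖A‖ ≤ ∑ i, ∑ j, c i j := by
  have hM : (0:ℝ) ≤ ∑ i, ∑ j, c i j :=
    Finset.sum_nonneg fun i _ => Finset.sum_nonneg fun j _ =>
      le_trans (norm_nonneg _) (h i j)
  have key : ‖A‖₊ ≤ (⟨_, hM⟩ : ℝ≥0) := by
    rw [Matrix.linfty_opNNNorm_def]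
    refine Finset.sup_le fun i _ => ?_
    refine NNReal.coe_le_coe.1 ?_
    push_cast
    refine le_trans (Finset.sum_le_sum fun j _ => h i j) ?_
    refine Finset.single_le_sum (f := fun i => ∑ j, c i j) (fun k _ => ?_) (Finset.mem_univ i)
    exact Finset.sum_nonneg fun j _ => le_trans (norm_nonneg _) (h k j)
  exact key

lemma frob_le {n : ℕ} (A : Matrix (Fin n) (Fin n) ℂ) : frobC A ≤ n * ‖A‖ := by
  have h0 : (0:ℝ) ≤ ‖A‖ := norm_nonneg _
  have h1 : frobC A ≤ Real.sqrt (∑ _i : Fin n, ∑ _j : Fin n, ‖A‖ ^ 2) := by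
    apply Real.sqrt_le_sqrt
    refine Finset.sum_le_sum fun i _ => Finset.sum_le_sum fun j _ => ?_
    exact pow_le_pow_left₀ (norm_nonneg _) (entry_le A i j) 2
  have h2 : (∑ _i : Fin n, ∑ _j : Fin n, ‖A‖ ^ 2) = ((n:ℝ) * ‖A‖)^2 := by
    simp [Finset.sum_const, Finset.card_univ, mul_pow]; ring
  rw [h2, Real.sqrt_sq (by positivity)] at h1
  exact h1

lemma exp_int {δ : ℝ} (ν T : Measure ℝ) (hν : ν ≤ T)
    (hf : ∫⁻ t, ENNReal.ofReal (Real.exp (δ * t)) ∂T < ⊤) :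
    Integrable (fun t => Real.exp (δ * t)) (ν.restrict (Ici 0)) := by
  refine ⟨(Real.measurable_exp.comp (measurable_const.mul measurable_id)).aestronglyMeasurable, ?_⟩
  rw [HasFiniteIntegral]
  calc ∫⁻ t, ‖Real.exp (δ * t)‖₊ ∂(ν.restrict (Ici 0))
      ≤ ∫⁻ t, ‖Real.exp (δ * t)‖₊ ∂T :=
        lintegral_mono' (le_trans Measure.restrict_le_self hν) le_rfl
    _ = ∫⁻ t, ENNReal.ofReal (Real.exp (δ * t)) ∂T := by
        congr 1; funext t; exact Real.enorm_eq_ofReal (Real.exp_pos _).le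
    _ < ⊤ := hf

lemma lap_helper {δ : ℝ} (ν T : Measure ℝ) (hν : ν ≤ T)
    (hf : ∫⁻ t, ENNReal.ofReal (Real.exp (δ * t)) ∂T < ⊤)
    (z : ℂ) (hz : -δ ≤ z.re) :
    ‖∫ t in Ici 0, Complex.exp (-z * t) ∂ν‖ ≤ ∫ t in Ici 0, Real.exp (δ * t) ∂ν := by
  have habs : ∀ t : ℝ, ‖Complex.exp (-z * t)‖ = Real.exp (-z.re * t) := by
    intro t
    rw [Complex.norm_exp]
    congr 1
    simp [Complex.mul_re]
  have hle : ∀ t ∈ Ici (0:ℝ), Real.exp (-z.re * t) ≤ Real.exp (δ * t) := fun t ht =>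
    Real.exp_le_exp.2 (mul_le_mul_of_nonneg_right (by linarith) (mem_Ici.1 ht))
  have hint := exp_int ν T hν hf
  have hmeas : AEStronglyMeasurable (fun t : ℝ => ‖Complex.exp (-z * t)‖) (ν.restrict (Ici 0)) :=
    Continuous.aestronglyMeasurable (Continuous.norm (Complex.continuous_exp.comp
      (continuous_const.mul Complex.continuous_ofReal)))
  have hintf : Integrable (fun t : ℝ => ‖Complex.exp (-z * t)‖) (ν.restrict (Ici 0)) := by
    refine hint.mono hmeas ?_
    refine (ae_restrict_iff' measurableSet_Ici).2 (Filter.Eventually.of_forall fun t ht => ?_)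
    rw [norm_norm, habs t, Real.norm_eq_abs, abs_of_pos (Real.exp_pos _)]
    exact hle t ht
  calc ‖∫ t in Ici 0, Complex.exp (-z * t) ∂ν‖
      ≤ ∫ t in Ici 0, ‖Complex.exp (-z * t)‖ ∂ν := norm_integral_le_integral_norm _
    _ ≤ ∫ t in Ici 0, Real.exp (δ * t) ∂ν := by
        refine setIntegral_mono_on hintf hint measurableSet_Ici fun t ht => ?_
        rw [habs t]; exact hle t ht

lemma tail_bound {n : ℕ} (hn : 1 ≤ n) (δ : ℝ) (η : Matrix (Fin n) (Fin n) (SignedMeasure ℝ))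
    (G : ℂ → Matrix (Fin n) (Fin n) ℂ) (hC : CondC δ η G)
    (CC : ℝ) (hCC : 0 ≤ CC) (z : ℂ) (hz : -δ < z.re)
    (hL : ‖lapM η z‖ ≤ CC) (hbig : 2 * CC + 1 ≤ ‖z‖) :
    frobC ((1 : Matrix (Fin n) (Fin n) ℂ) - G z) ≤ n * (2 * CC) / ‖z‖ := by
  haveI : Nonempty (Fin n) := ⟨⟨0, hn⟩⟩
  have habs0 : (0:ℝ) < ‖z‖ := by linarith
  have hz0 : z ≠ 0 := by
    intro h; rw [h] at habs0; simp at habs0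
  set A : Matrix (Fin n) (Fin n) ℂ := z⁻¹ • lapM η z with hAdef
  have hnA : ‖A‖ ≤ 1 / 2 := by
    have h1 : ‖A‖ = (‖z‖)⁻¹ * ‖lapM η z‖ := by
      rw [hAdef, norm_smul]; congr 1
      simp
    rw [h1]
    have h2 : (‖z‖)⁻¹ ≤ (2 * CC + 1)⁻¹ := by
      apply inv_anti₀ (by linarith) hbig
    have h3 : (‖z‖)⁻¹ * ‖lapM η z‖ ≤ (2 * CC + 1)⁻¹ * CC := by
      apply mul_le_mul h2 hL (norm_nonneg _) (by positivity)
    refine le_trans h3 ?_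
    rw [inv_mul_le_iff₀ (by linarith)]
    nlinarith
  have hA1 : ‖A‖ < 1 := lt_of_le_of_lt hnA (by norm_num)
  set v : (Matrix (Fin n) (Fin n) ℂ)ˣ := Units.oneSub A hA1 with hvdef
  have hvval : (↑v : Matrix (Fin n) (Fin n) ℂ) = 1 - A := rfl
  have hnv : ‖(↑v⁻¹ : Matrix (Fin n) (Fin n) ℂ)‖ ≤ 2 := by
    have h1 : ‖(↑v⁻¹ : Matrix (Fin n) (Fin n) ℂ)‖ ≤
        ‖(1 : Matrix (Fin n) (Fin n) ℂ)‖ - 1 + (1 - ‖A‖)⁻¹ :=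
      tsum_geometric_le_of_norm_lt_one A hA1
    rw [norm_one] at h1
    have h2 : (1 - ‖A‖)⁻¹ ≤ 2 := by
      have h3 : (1:ℝ)/2 ≤ 1 - ‖A‖ := by linarith
      calc (1 - ‖A‖)⁻¹ ≤ ((1:ℝ)/2)⁻¹ := inv_anti₀ (by norm_num) h3
        _ = 2 := by norm_num
    linarith
  have hh : hEta η z = z • ((1 : Matrix (Fin n) (Fin n) ℂ) - A) := by
    rw [smul_sub, hAdef, smul_smul, mul_inv_cancel₀ hz0, one_smul, hEta]
  have hinv1 : hEta η z * ((z⁻¹ : ℂ) • (↑v⁻¹ : Matrix (Fin n) (Fin n) ℂ)) = 1 := by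
    rw [hh, ← hvval, smul_mul_smul_comm, mul_inv_cancel₀ hz0, Units.mul_inv, one_smul]
  have hhi : (hEta η z)⁻¹ = (z⁻¹ : ℂ) • (↑v⁻¹ : Matrix (Fin n) (Fin n) ℂ) :=
    Matrix.inv_eq_right_inv hinv1
  have hone : hEta η z * (hEta η z)⁻¹ = 1 := by rw [hhi]; exact hinv1
  have hGsplit : G z = 1 + lapM η z * (hEta η z)⁻¹ := by
    rw [hC.2.2 z hz hz0]
    calc z • (hEta η z)⁻¹ = (z • (1 : Matrix (Fin n) (Fin n) ℂ)) * (hEta η z)⁻¹ := by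
          rw [smul_mul_assoc, one_mul]
      _ = (hEta η z + lapM η z) * (hEta η z)⁻¹ := by rw [hEta, sub_add_cancel]
      _ = 1 + lapM η z * (hEta η z)⁻¹ := by rw [add_mul, hone]
  have hsub : (1 : Matrix (Fin n) (Fin n) ℂ) - G z = -(lapM η z * (hEta η z)⁻¹) := by
    rw [hGsplit]; abel
  have hnormsub : ‖(1 : Matrix (Fin n) (Fin n) ℂ) - G z‖ ≤ CC * ((‖z‖)⁻¹ * 2) := by
    rw [hsub, norm_neg]
    calc ‖lapM η z * (hEta η z)⁻¹‖ ≤ ‖lapM η z‖ * ‖(hEta η z)⁻¹‖ := norm_mul_le _ _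
      _ ≤ CC * ((‖z‖)⁻¹ * 2) := by
          refine mul_le_mul hL ?_ (norm_nonneg _) hCC
          rw [hhi, norm_smul]
          have h4 : ‖(z⁻¹ : ℂ)‖ = (‖z‖)⁻¹ := by simp
          rw [h4]
          exact mul_le_mul_of_nonneg_left hnv (by positivity)
  calc frobC ((1 : Matrix (Fin n) (Fin n) ℂ) - G z) ≤ n * ‖(1 : Matrix (Fin n) (Fin n) ℂ) - G z‖ :=
        frob_le _
    _ ≤ n * (CC * ((‖z‖)⁻¹ * 2)) := by
        apply mul_le_mul_of_nonneg_left hnormsub (by positivity)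
    _ = n * (2 * CC) / ‖z‖ := by rw [div_eq_mul_inv]; ring

end Statement11Aux

open Statement11Aux
set_option maxHeartbeats 1000000

/-- Under a `δ`-exponential moment and Condition (C), for every
`ε ∈ (0,δ)`, `sup_{x > −ε} ∫_ℝ ‖Iₙ − (x+iy) h_η(x+iy)⁻¹‖² dy < ∞`, where
`z h_η(z)⁻¹` is understood via its analytic extension `G`. -/
theorem statement11 {n : ℕ} (hn : 1 ≤ n) (δ : ℝ) (hδ : 0 < δ)
    (η : Matrix (Fin n) (Fin n) (SignedMeasure ℝ))
    (hsupp : SuppNonneg η) (hmom : ExpMoment δ η)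
    (G : ℂ → Matrix (Fin n) (Fin n) ℂ) (hC : CondC δ η G) :
    ∀ ε : ℝ, 0 < ε → ε < δ →
      (∀ x : ℝ, -ε < x → Integrable (fun y : ℝ =>
          frobC ((1 : Matrix (Fin n) (Fin n) ℂ) - G ((x : ℂ) + (y : ℂ) * Complex.I)) ^ 2)
        volume) ∧
      ∃ M : ℝ, ∀ x : ℝ, -ε < x →
        (∫ y : ℝ, frobC ((1 : Matrix (Fin n) (Fin n) ℂ)
            - G ((x : ℂ) + (y : ℂ) * Complex.I)) ^ 2) ≤ M := by
  intro ε hε0 hεδ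
  haveI : Nonempty (Fin n) := ⟨⟨0, hn⟩⟩
  classical
  -- the uniform bound on the Laplace transform
  set Cij : Fin n → Fin n → ℝ := fun i j =>
    (∫ t in Ici (0:ℝ), Real.exp (δ * t) ∂(η i j).toJordanDecomposition.posPart) +
      ∫ t in Ici (0:ℝ), Real.exp (δ * t) ∂(η i j).toJordanDecomposition.negPart with hCijdef
  have hCij0 : ∀ i j, 0 ≤ Cij i j := fun i j =>
    add_nonneg (integral_nonneg fun t => (Real.exp_pos _).le)
      (integral_nonneg fun t => (Real.exp_pos _).le)
  set CC : ℝ := ∑ i, ∑ j, Cij i j with hCCdef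
  have hCC0 : 0 ≤ CC :=
    Finset.sum_nonneg fun i _ => Finset.sum_nonneg fun j _ => hCij0 i j
  have hLbound : ∀ z : ℂ, -δ ≤ z.re → ‖lapM η z‖ ≤ CC := by
    intro z hz
    refine norm_le_sum _ _ fun i j => ?_
    have hpos : (η i j).toJordanDecomposition.posPart ≤ (η i j).totalVariation :=
      Measure.le_add_right le_rfl
    have hneg : (η i j).toJordanDecomposition.negPart ≤ (η i j).totalVariation :=
      Measure.le_add_left le_rfl
    calc ‖lapM η z i j‖
        = ‖(∫ t in Ici (0:ℝ), Complex.exp (-z * t) ∂(η i j).toJordanDecomposition.posPart) -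
            ∫ t in Ici (0:ℝ), Complex.exp (-z * t) ∂(η i j).toJordanDecomposition.negPart‖ := rfl
      _ ≤ ‖∫ t in Ici (0:ℝ), Complex.exp (-z * t) ∂(η i j).toJordanDecomposition.posPart‖ +
            ‖∫ t in Ici (0:ℝ), Complex.exp (-z * t) ∂(η i j).toJordanDecomposition.negPart‖ :=
          norm_sub_le _ _
      _ ≤ Cij i j :=
          add_le_add (lap_helper _ _ hpos (hmom i j) z hz)
            (lap_helper _ _ hneg (hmom i j) z hz)
  set R : ℝ := 2 * CC + 1 with hRdef
  have hR1 : (1:ℝ) ≤ R := by simp [hRdef]; linarith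
  -- continuity of the integrand
  set ψ : ℂ → ℝ := fun z => frobC ((1 : Matrix (Fin n) (Fin n) ℂ) - G z) ^ 2 with hψdef
  have hψ0 : ∀ z, 0 ≤ ψ z := fun z => sq_nonneg _
  have hψeq : ∀ z : ℂ, ψ z =
      ∑ i, ∑ j, ‖(1 : Matrix (Fin n) (Fin n) ℂ) i j - G z i j‖ ^ 2 := by
    intro z
    rw [hψdef]
    simp only [frobC]
    rw [Real.sq_sqrt (Finset.sum_nonneg fun i _ => Finset.sum_nonneg fun j _ => sq_nonneg _)]
    refine Finset.sum_congr rfl fun i _ => Finset.sum_congr rfl fun j _ => ?_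
    rw [Matrix.sub_apply]
  set U : Set ℂ := {z : ℂ | -δ < z.re} with hUdef
  have hψcont : ContinuousOn ψ U := by
    have h1 : ContinuousOn (fun z : ℂ =>
        ∑ i, ∑ j, ‖(1 : Matrix (Fin n) (Fin n) ℂ) i j - G z i j‖ ^ 2) U := by
      refine continuousOn_finset_sum _ fun i _ => continuousOn_finset_sum _ fun j _ => ?_
      exact ((continuousOn_const.sub (hC.2.1 i j).continuousOn).norm).pow 2
    exact h1.congr fun z _ => hψeq z
  -- compact part
  set K : Set ℂ := Complex.re ⁻¹' Icc (-ε) R ∩ Complex.im ⁻¹' Icc (-R) R with hKdef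
  have hKU : K ⊆ U := by
    intro z hz
    have : -ε ≤ z.re := hz.1.1
    show -δ < z.re
    linarith
  have hKcomp : IsCompact K := by
    refine Metric.isCompact_of_isClosed_isBounded ?_ ?_
    · exact (isClosed_Icc.preimage Complex.continuous_re).inter
        (isClosed_Icc.preimage Complex.continuous_im)
    · refine (Metric.isBounded_closedBall (x := (0:ℂ)) (r := ε + R + R)).subset ?_
      intro z hz
      have h1 : |z.re| ≤ ε + R := by
        rw [abs_le]
        constructor
        · have := hz.1.1; linarith
        · have := hz.1.2; linarith
      have h2 : |z.im| ≤ R := abs_le.2 ⟨hz.2.1, hz.2.2⟩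
      have h3 : ‖z‖ ≤ |z.re| + |z.im| := Complex.norm_le_abs_re_add_abs_im z
      simp only [Metric.mem_closedBall, Complex.dist_eq, sub_zero]
      linarith
  obtain ⟨Kb, hKb⟩ := hKcomp.exists_bound_of_continuousOn (hψcont.mono hKU)
  set Kb' : ℝ := max Kb 0 with hKb'def
  have hKb'0 : 0 ≤ Kb' := le_max_right _ _
  set B : ℝ := max (Kb' * (1 + R ^ 2)) (8 * (n:ℝ) ^ 2 * CC ^ 2) with hBdef
  have hB1 : Kb' * (1 + R ^ 2) ≤ B := le_max_left _ _
  have hB2 : 8 * (n:ℝ) ^ 2 * CC ^ 2 ≤ B := le_max_right _ _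
  have hB0 : 0 ≤ B := le_trans (by positivity) hB2
  -- the dominating function
  have hgint : Integrable (fun y : ℝ => B * (1 + y ^ 2)⁻¹) volume :=
    integrable_inv_one_add_sq.const_mul B
  -- pointwise bound
  have key : ∀ x : ℝ, -ε < x → ∀ y : ℝ, ψ ((x : ℂ) + (y : ℂ) * Complex.I) ≤ B * (1 + y ^ 2)⁻¹ := by
    intro x hx y
    set z : ℂ := (x : ℂ) + (y : ℂ) * Complex.I with hzdef
    have hre : z.re = x := by simp [hzdef]
    have him : z.im = y := by simp [hzdef]
    have hzre : -δ < z.re := by rw [hre]; linarith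
    have hy2 : (0:ℝ) < 1 + y ^ 2 := by positivity
    by_cases hbig : 2 * CC + 1 ≤ ‖z‖
    · have habs0 : (0:ℝ) < ‖z‖ := by linarith
      have ht := tail_bound hn δ η G hC CC hCC0 z hzre (hLbound z hzre.le) hbig
      have habsq : ‖z‖ ^ 2 = x ^ 2 + y ^ 2 := by
        rw [Complex.sq_norm, hzdef, Complex.normSq_add_mul_I]
      have hbig2 : (1:ℝ) ≤ x ^ 2 + y ^ 2 := by
        rw [← habsq]; nlinarith
      have hxy0 : (0:ℝ) < x ^ 2 + y ^ 2 := by linarith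
      have hsq : ψ z ≤ ((n:ℝ) * (2 * CC)) ^ 2 / (x ^ 2 + y ^ 2) := by
        have h8 : ψ z ≤ ((n:ℝ) * (2 * CC) / ‖z‖) ^ 2 := by
          rw [hψdef]
          exact pow_le_pow_left₀ (Real.sqrt_nonneg _) ht 2
        rwa [div_pow, habsq] at h8
      refine le_trans hsq ?_
      rw [mul_comm B, inv_mul_eq_div, div_le_div_iff₀ hxy0 hy2]
      have ha0 : (0:ℝ) ≤ 4 * (n:ℝ) ^ 2 * CC ^ 2 := by positivity
      have h9 : 8 * (n:ℝ) ^ 2 * CC ^ 2 * (x ^ 2 + y ^ 2) ≤ B * (x ^ 2 + y ^ 2) :=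
        mul_le_mul_of_nonneg_right hB2 hxy0.le
      have h10 : 4 * (n:ℝ) ^ 2 * CC ^ 2 * 1 ≤ 4 * (n:ℝ) ^ 2 * CC ^ 2 * (x ^ 2 + y ^ 2) :=
        mul_le_mul_of_nonneg_left hbig2 ha0
      have h11 : 4 * (n:ℝ) ^ 2 * CC ^ 2 * y ^ 2 ≤ 4 * (n:ℝ) ^ 2 * CC ^ 2 * (x ^ 2 + y ^ 2) :=
        mul_le_mul_of_nonneg_left (by linarith [sq_nonneg x]) ha0
      have hexp : ((n:ℝ) * (2 * CC)) ^ 2 * (1 + y ^ 2) =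
          4 * (n:ℝ) ^ 2 * CC ^ 2 * 1 + 4 * (n:ℝ) ^ 2 * CC ^ 2 * y ^ 2 := by ring
      linarith [h9, h10, h11, hexp.le, hexp.ge]
    · push_neg at hbig
      have h6 : |y| ≤ ‖z‖ := by
        have := Complex.abs_im_le_norm z; rwa [him] at this
      have hzK : z ∈ K := by
        constructor
        · simp only [Set.mem_preimage, Set.mem_Icc, hre]
          have h7 := Complex.abs_re_le_norm z
          rw [hre] at h7
          have hxabs : x ≤ |x| := le_abs_self x
          simp only [hRdef]
          exact ⟨by linarith, by linarith⟩
        · simp only [Set.mem_preimage, Set.mem_Icc, him]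
          have h8 := neg_abs_le y
          have h9 := le_abs_self y
          simp only [hRdef]
          exact ⟨by linarith, by linarith⟩
      have hψK : ψ z ≤ Kb' := by
        have h12 := hKb z hzK
        rw [Real.norm_eq_abs] at h12
        refine le_trans (le_trans (le_abs_self _) h12) (le_max_left _ _)
      have hyR : y ^ 2 ≤ R ^ 2 := by
        have h7 : |y| ≤ R := by linarith
        nlinarith [abs_nonneg y, _root_.sq_abs y]
      rw [mul_comm B, inv_mul_eq_div, le_div_iff₀ hy2]
      have h13 : ψ z * (1 + y ^ 2) ≤ Kb' * (1 + y ^ 2) :=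
        mul_le_mul_of_nonneg_right hψK hy2.le
      have h14 : Kb' * (1 + y ^ 2) ≤ Kb' * (1 + R ^ 2) :=
        mul_le_mul_of_nonneg_left (by linarith) hKb'0
      linarith
  -- integrability and the uniform bound
  have hint : ∀ x : ℝ, -ε < x →
      Integrable (fun y : ℝ => ψ ((x : ℂ) + (y : ℂ) * Complex.I)) volume := by
    intro x hx
    have hmap : Continuous fun y : ℝ => (x : ℂ) + (y : ℂ) * Complex.I :=
      continuous_const.add (Complex.continuous_ofReal.mul continuous_const)
    have hmem : ∀ y : ℝ, ((x : ℂ) + (y : ℂ) * Complex.I) ∈ U := by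
      intro y
      have hre : ((x : ℂ) + (y : ℂ) * Complex.I).re = x := by simp
      show -δ < ((x : ℂ) + (y : ℂ) * Complex.I).re
      rw [hre]; linarith
    have hcont : Continuous fun y : ℝ => ψ ((x : ℂ) + (y : ℂ) * Complex.I) :=
      hψcont.comp_continuous hmap hmem
    refine hgint.mono' hcont.aestronglyMeasurable (ae_of_all _ fun y => ?_)
    rw [Real.norm_eq_abs, _root_.abs_of_nonneg (hψ0 _)]
    exact key x hx y
  exact ⟨fun x hx => hint x hx,
    ⟨∫ y : ℝ, B * (1 + y ^ 2)⁻¹, fun x hx => integral_mono (hint x hx) hgint (key x hx)⟩⟩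
end
end

section
/- Suppose the signed n×n matrix measure η has a δ-exponential moment and satisfies Condition (C). Then for every ε ∈ (0,δ), sup { ‖z·h_η(z)^{−1}‖ : z ∈ ℂ, Re(z) ≥ −ε, z ≠ 0 } < ∞; equivalently, the analytic extension of z ↦ z·h_η(z)^{−1} is bounded on the closed half-plane {z : Re(z) ≥ −ε}. -/
open MeasureTheory Matrix Complex Set

noncomputable section

/- ### Auxiliary lemmas for Statement 12 -/

attribute [local instance] Matrix.frobeniusNormedAddCommGroup Matrix.frobeniusNormedSpace
  Matrix.frobeniusNormedRing Matrix.frobeniusNormedAlgebra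

lemma frobC_eq_norm {n : ℕ} (A : Matrix (Fin n) (Fin n) ℂ) : frobC A = ‖A‖ := by
  rw [frobC, Matrix.frobenius_norm_def, ← Real.sqrt_eq_rpow]
  congr 1
  refine Finset.sum_congr rfl fun i _ => Finset.sum_congr rfl fun j _ => ?_
  rw [← Real.rpow_natCast (‖A i j‖) 2]
  norm_num

lemma piece_bound (μ : SignedMeasure ℝ) (ν : Measure ℝ) (hν : ν ≤ μ.totalVariation)
    (δ ε : ℝ) (hεδ : ε ≤ δ)
    (hmom : (∫⁻ t, ENNReal.ofReal (Real.exp (δ * t)) ∂μ.totalVariation) < ⊤)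
    (z : ℂ) (hz : -ε ≤ z.re) :
    ‖∫ t in Set.Ici (0:ℝ), Complex.exp (-z * t) ∂ν‖ ≤
      (∫⁻ t, ENNReal.ofReal (Real.exp (δ * t)) ∂μ.totalVariation).toReal := by
  refine le_trans (norm_integral_le_lintegral_norm _) ?_
  refine ENNReal.toReal_mono hmom.ne ?_
  have h1 : (∫⁻ t in Set.Ici (0:ℝ), ENNReal.ofReal ‖Complex.exp (-z * t)‖ ∂ν) ≤
      ∫⁻ t in Set.Ici (0:ℝ), ENNReal.ofReal (Real.exp (δ * t)) ∂ν := by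
    refine setLIntegral_mono' measurableSet_Ici fun t ht => ?_
    refine ENNReal.ofReal_le_ofReal ?_
    rw [Complex.norm_exp]
    refine Real.exp_le_exp.2 ?_
    have h3 : (-z * (t:ℂ)).re = -z.re * t := by simp [Complex.mul_re]
    rw [h3]
    have h2 : -z.re ≤ δ := by linarith
    nlinarith [mem_Ici.1 ht]
  refine le_trans h1 ?_
  exact le_trans (setLIntegral_le_lintegral _ _) (lintegral_mono' hν le_rfl)

lemma sIntOnC_exp_bound (μ : SignedMeasure ℝ) (δ ε : ℝ) (hεδ : ε ≤ δ)
    (hmom : (∫⁻ t, ENNReal.ofReal (Real.exp (δ * t)) ∂μ.totalVariation) < ⊤)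
    (z : ℂ) (hz : -ε ≤ z.re) :
    ‖sIntOnC μ (Set.Ici 0) (fun t => Complex.exp (-z * t))‖ ≤
      2 * (∫⁻ t, ENNReal.ofReal (Real.exp (δ * t)) ∂μ.totalVariation).toReal := by
  have hp : μ.toJordanDecomposition.posPart ≤ μ.totalVariation := by
    rw [SignedMeasure.totalVariation]; exact Measure.le_add_right le_rfl
  have hq : μ.toJordanDecomposition.negPart ≤ μ.totalVariation := by
    rw [SignedMeasure.totalVariation]; exact Measure.le_add_left le_rfl
  have h1 := piece_bound μ _ hp δ ε hεδ hmom z hz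
  have h2 := piece_bound μ _ hq δ ε hεδ hmom z hz
  rw [sIntOnC]
  calc ‖_ - _‖ ≤ ‖_‖ + ‖_‖ := norm_sub_le _ _
  _ ≤ _ := by linarith

lemma lapM_bound {n : ℕ} (δ ε : ℝ) (hεδ : ε ≤ δ)
    (η : Matrix (Fin n) (Fin n) (SignedMeasure ℝ)) (hmom : ExpMoment δ η)
    (z : ℂ) (hz : -ε ≤ z.re) :
    ‖lapM η z‖ ≤ Real.sqrt (∑ i, ∑ j,
      (2 * (∫⁻ t, ENNReal.ofReal (Real.exp (δ * t))
        ∂(η i j).totalVariation).toReal) ^ 2) := by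
  rw [← frobC_eq_norm, frobC]
  refine Real.sqrt_le_sqrt ?_
  refine Finset.sum_le_sum fun i _ => Finset.sum_le_sum fun j _ => ?_
  refine pow_le_pow_left₀ (norm_nonneg _) ?_ 2
  have : ‖lapM η z i j‖ =
      ‖sIntOnC (η i j) (Set.Ici 0) (fun t => Complex.exp (-z * t))‖ := rfl
  rw [this]
  exact sIntOnC_exp_bound (η i j) δ ε hεδ (hmom i j) z hz

/-- Under a `δ`-exponential moment and Condition (C), for each
`ε ∈ (0,δ)` the analytic extension `G` of `z ↦ z h_η(z)⁻¹` is bounded on the closed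
half-plane `{Re z ≥ −ε}`. -/
theorem statement12 {n : ℕ} (hn : 1 ≤ n) (δ : ℝ) (hδ : 0 < δ)
    (η : Matrix (Fin n) (Fin n) (SignedMeasure ℝ))
    (hsupp : SuppNonneg η) (hmom : ExpMoment δ η)
    (G : ℂ → Matrix (Fin n) (Fin n) ℂ) (hC : CondC δ η G) :
    ∀ ε : ℝ, 0 < ε → ε < δ → ∃ M : ℝ, ∀ z : ℂ, -ε ≤ z.re → frobC (G z) ≤ M := by
  intro ε hε0 hεδ
  set C : ℝ := Real.sqrt (∑ i, ∑ j,
      (2 * (∫⁻ t, ENNReal.ofReal (Real.exp (δ * t))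
        ∂(η i j).totalVariation).toReal) ^ 2) with hCdef
  have hC0 : 0 ≤ C := Real.sqrt_nonneg _
  set R : ℝ := 2 * C + 1 with hRdef
  have hR1 : (1:ℝ) ≤ R := by linarith
  -- continuity of frobC ∘ G on the open half-plane
  have hcont : ContinuousOn (fun z => frobC (G z)) {z : ℂ | -δ < z.re} := by
    simp only [frobC]
    apply Real.continuous_sqrt.comp_continuousOn
    refine continuousOn_finset_sum _ fun i _ => continuousOn_finset_sum _ fun j _ => ?_
    exact (continuous_norm.comp_continuousOn
      ((hC.2.1 i j).continuousOn)).pow 2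
  -- the compact region
  set K : Set ℂ := {z : ℂ | -ε ≤ z.re} ∩ Metric.closedBall 0 R with hKdef
  have hKc : IsCompact K :=
    (isCompact_closedBall (0:ℂ) R).inter_left (isClosed_le continuous_const Complex.continuous_re)
  have hKsub : K ⊆ {z : ℂ | -δ < z.re} := by
    rintro z ⟨hz1, -⟩
    have : -ε ≤ z.re := hz1
    simp only [Set.mem_setOf_eq]; linarith
  have hKne : K.Nonempty := by
    refine ⟨0, ?_, ?_⟩
    · simp only [Set.mem_setOf_eq, Complex.zero_re]; linarith
    · simp only [Metric.mem_closedBall, dist_self]; linarith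
  obtain ⟨w, hwK, hwmax⟩ := hKc.exists_isMaxOn hKne (hcont.mono hKsub)
  refine ⟨max (frobC (G w)) (2 * ‖(1 : Matrix (Fin n) (Fin n) ℂ)‖), fun z hz => ?_⟩
  rcases le_total (‖z‖) R with hzR | hzR
  · -- small |z| : use the maximum on the compact set
    have hzK : z ∈ K := by
      refine ⟨hz, ?_⟩
      simpa [Metric.mem_closedBall, Complex.dist_eq] using hzR
    exact le_trans (hwmax hzK) (le_max_left _ _)
  · -- large |z| : Neumann-type estimate
    have hzabs : 0 < ‖z‖ := lt_of_lt_of_le (by linarith) hzR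
    have hz0 : z ≠ 0 := by
      intro h; rw [h] at hzabs; simp at hzabs
    have hzre : -δ < z.re := by
      have : -ε ≤ z.re := hz
      linarith
    have hdet := hC.1 z hzre hz0
    have hG := hC.2.2 z hzre hz0
    set L := lapM η z with hLdef
    set B : Matrix (Fin n) (Fin n) ℂ := (z⁻¹ : ℂ) • L with hBdef
    have hfac : hEta η z = z • ((1 : Matrix (Fin n) (Fin n) ℂ) - B) := by
      simp only [hEta, hBdef, smul_sub, smul_smul, mul_inv_cancel₀ hz0, one_smul, hLdef]
    have hkey : ((1 : Matrix (Fin n) (Fin n) ℂ) - B) * G z = 1 := by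
      rw [hG, Matrix.mul_smul, ← Matrix.smul_mul, ← hfac,
        Matrix.mul_nonsing_inv _ (isUnit_iff_ne_zero.2 hdet)]
    have hGeq : G z = 1 + B * G z := by
      rw [sub_mul, one_mul] at hkey
      exact sub_eq_iff_eq_add.1 hkey
    have hnL : ‖L‖ ≤ C := lapM_bound δ ε hεδ.le η hmom z hz
    have hnB : ‖B‖ ≤ 1/2 := by
      rw [hBdef, norm_smul]
      have h1 : ‖(z⁻¹ : ℂ)‖ = (‖z‖)⁻¹ := by
        simp
      rw [h1]
      have h2 : (‖z‖)⁻¹ ≤ R⁻¹ := by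
        exact inv_anti₀ (by linarith) hzR
      have h3 : (‖z‖)⁻¹ * ‖L‖ ≤ R⁻¹ * C := by
        apply mul_le_mul h2 hnL (norm_nonneg _) (by positivity)
      refine le_trans h3 ?_
      rw [inv_mul_le_iff₀ (by linarith : (0:ℝ) < R)]
      rw [hRdef]; linarith
    have h1 : ‖G z‖ ≤ ‖(1 : Matrix (Fin n) (Fin n) ℂ)‖ + ‖B‖ * ‖G z‖ := by
      calc ‖G z‖ = ‖1 + B * G z‖ := by rw [← hGeq]
      _ ≤ ‖(1 : Matrix (Fin n) (Fin n) ℂ)‖ + ‖B * G z‖ := norm_add_le _ _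
      _ ≤ _ := by gcongr; exact norm_mul_le _ _
    have hnG : ‖G z‖ ≤ 2 * ‖(1 : Matrix (Fin n) (Fin n) ℂ)‖ := by
      nlinarith [norm_nonneg (G z), norm_nonneg (1 : Matrix (Fin n) (Fin n) ℂ)]
    rw [frobC_eq_norm]
    exact le_trans hnG (le_max_right _ _)
end
end

section
/- Suppose the signed n×n matrix measure η has a δ-exponential moment and satisfies Condition (C), let f be as specified, and define C₀ := I_n − ∫_0^∞ f(u) du and C(t) := ∫_t^∞ f(u) du for t ≥ 0. Then for every z ∈ ℍ_δ with z ≠ 0, the function t ↦ e^{−zt}C(t) is Bochner integrable on [0,∞) and ∫_0^∞ e^{−zt} C(t) dt = h_η(z)^{−1} − z^{−1}C₀. -/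
open MeasureTheory Matrix Complex Set

noncomputable section

lemma aux_exp_int_Ioi {ε : ℝ} (hε : 0 < ε) (t : ℝ) :
    ∫ u in Set.Ioi t, Real.exp (-ε * u) = Real.exp (-ε * t) / ε := by
  have hderiv : ∀ x ∈ Set.Ioi t, HasDerivAt (fun u => -Real.exp (-ε * u) / ε)
      (Real.exp (-ε * x)) x := by
    intro x _
    have h1 : HasDerivAt (fun u : ℝ => -ε * u) (-ε) x := by
      simpa using (hasDerivAt_id x).const_mul (-ε)
    have h2 := (Real.hasDerivAt_exp (-ε * x)).comp x h1
    have h3 := (h2.neg).div_const ε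
    exact h3.congr_deriv (by field_simp)
  have hint : IntegrableOn (fun u => Real.exp (-ε * u)) (Set.Ioi t) :=
    exp_neg_integrableOn_Ioi t hε
  have htend : Filter.Tendsto (fun u => -Real.exp (-ε * u) / ε) Filter.atTop (nhds 0) := by
    have h : Filter.Tendsto (fun u : ℝ => Real.exp (-ε * u)) Filter.atTop (nhds 0) := by
      apply Real.tendsto_exp_atBot.comp
      exact Filter.Tendsto.const_mul_atTop_of_neg (neg_neg_iff_pos.mpr hε) Filter.tendsto_id
    simpa using (h.neg).div_const ε
  have hcont : ContinuousWithinAt (fun u => -Real.exp (-ε * u) / ε) (Set.Ici t) t :=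
    (Continuous.continuousWithinAt (by continuity))
  have := MeasureTheory.integral_Ioi_of_hasDerivAt_of_tendsto hcont hderiv hint htend
  rw [this]
  field_simp
  ring

lemma aux_scalar_main {g : ℝ → ℝ} (hg : Measurable g) {M ε : ℝ} (hε : 0 < ε)
    (hb : ∀ t, |g t| ≤ M * Real.exp (-ε * t)) (z : ℂ) (hz : -ε < z.re) (hz0 : z ≠ 0) :
    IntegrableOn (fun t : ℝ => Complex.exp (-z * t) * ((∫ u in Set.Ioi t, g u : ℝ) : ℂ))
      (Set.Ici 0) volume ∧
    (∫ t in Set.Ici (0 : ℝ), Complex.exp (-z * t) * ((∫ u in Set.Ioi t, g u : ℝ) : ℂ)) =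
      z⁻¹ * ((∫ u in Set.Ici (0 : ℝ), (g u : ℂ)) -
        ∫ u in Set.Ici (0 : ℝ), Complex.exp (-z * u) * (g u : ℂ)) := by
  have hM : 0 ≤ M := by
    have := (abs_nonneg (g 0)).trans (hb 0)
    simpa using this
  have hρ : 0 < z.re + ε := by linarith
  -- integrability of g on tails
  have hgint : ∀ t : ℝ, IntegrableOn g (Set.Ioi t) := by
    intro t
    refine Integrable.mono' (((exp_neg_integrableOn_Ioi t hε).const_mul M))
      (hg.aestronglyMeasurable.restrict) ?_
    exact Filter.Eventually.of_forall fun u => by simpa using hb u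
  -- bound for the tail integral of |g|
  have habs : ∀ t : ℝ, (∫ u in Set.Ioi t, |g u|) ≤ M / ε * Real.exp (-ε * t) := by
    intro t
    have h1 : (∫ u in Set.Ioi t, |g u|) ≤ ∫ u in Set.Ioi t, M * Real.exp (-ε * u) := by
      refine integral_mono_of_nonneg (Filter.Eventually.of_forall fun u => abs_nonneg _)
        ((exp_neg_integrableOn_Ioi t hε).const_mul M)
        (Filter.Eventually.of_forall fun u => hb u)
    rw [integral_const_mul, aux_exp_int_Ioi hε] at h1
    calc (∫ u in Set.Ioi t, |g u|) ≤ M * (Real.exp (-ε * t) / ε) := h1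
      _ = M / ε * Real.exp (-ε * t) := by ring
  have hCb : ∀ t : ℝ, |∫ u in Set.Ioi t, g u| ≤ M / ε * Real.exp (-ε * t) := by
    intro t
    calc |∫ u in Set.Ioi t, g u| ≤ ∫ u in Set.Ioi t, |g u| := by
          simpa [Real.norm_eq_abs] using
            norm_integral_le_integral_norm (μ := volume.restrict (Set.Ioi t)) g
      _ ≤ _ := habs t
  -- interval integrability, continuity of C
  have hloc : ∀ a b : ℝ, IntervalIntegrable g volume a b := by
    intro a b
    refine ((hgint (min a b - 1)).mono_set ?_).intervalIntegrable
    intro x hx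
    rcases Set.mem_uIcc.mp hx with ⟨h1, _⟩ | ⟨h1, _⟩ <;>
      · simp only [Set.mem_Ioi]
        cases le_total a b <;> simp [min_def, *] <;> linarith
  have hCsplit : ∀ a b : ℝ, a ≤ b →
      (∫ u in Set.Ioi a, g u) = (∫ u in a..b, g u) + ∫ u in Set.Ioi b, g u := by
    intro a b hab
    rw [intervalIntegral.integral_of_le hab]
    rw [← MeasureTheory.setIntegral_union (Set.Ioc_disjoint_Ioi le_rfl) measurableSet_Ioi
      ((hgint a).mono_set Set.Ioc_subset_Ioi_self) (hgint b), Set.Ioc_union_Ioi_eq_Ioi hab]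
  have hCeq : ∀ t : ℝ, (∫ u in Set.Ioi t, g u) =
      (∫ u in Set.Ioi (0:ℝ), g u) - ∫ u in (0:ℝ)..t, g u := by
    intro t
    rcases le_total 0 t with h | h
    · rw [hCsplit 0 t h]; ring
    · rw [hCsplit t 0 h, intervalIntegral.integral_symm]; ring
  have hCcont : Continuous fun t : ℝ => (∫ u in Set.Ioi t, g u) := by
    have heq : (fun t : ℝ => (∫ u in Set.Ioi t, g u)) =
        fun t => (∫ u in Set.Ioi (0:ℝ), g u) - ∫ u in (0:ℝ)..t, g u := funext hCeq
    rw [heq]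
    exact continuous_const.sub (intervalIntegral.continuous_primitive hloc 0)
  -- integrability of the target
  have hmeas : AEStronglyMeasurable
      (fun t : ℝ => Complex.exp (-z * t) * ((∫ u in Set.Ioi t, g u : ℝ) : ℂ))
      (volume.restrict (Set.Ici 0)) := by
    refine Continuous.aestronglyMeasurable ?_ |>.restrict
    exact (Complex.continuous_exp.comp
        (continuous_const.mul Complex.continuous_ofReal)).mul
      (Complex.continuous_ofReal.comp hCcont)
  have hnorm : ∀ t : ℝ, ‖Complex.exp (-z * t) * ((∫ u in Set.Ioi t, g u : ℝ) : ℂ)‖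
      ≤ M / ε * Real.exp (-(z.re + ε) * t) := by
    intro t
    rw [norm_mul, Complex.norm_exp, Complex.norm_real, Real.norm_eq_abs]
    have h1 : (-z * t).re = -z.re * t := by simp
    rw [h1]
    calc Real.exp (-z.re * t) * |∫ u in Set.Ioi t, g u|
        ≤ Real.exp (-z.re * t) * (M / ε * Real.exp (-ε * t)) :=
          mul_le_mul_of_nonneg_left (hCb t) (Real.exp_nonneg _)
      _ = M / ε * Real.exp (-(z.re + ε) * t) := by
          rw [show -(z.re + ε) * t = -z.re * t + -ε * t by ring, Real.exp_add]; ring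
  have hintC : IntegrableOn
      (fun t : ℝ => Complex.exp (-z * t) * ((∫ u in Set.Ioi t, g u : ℝ) : ℂ))
      (Set.Ici 0) volume := by
    have hdom : IntegrableOn (fun t => M / ε * Real.exp (-(z.re + ε) * t))
        (Set.Ici 0) volume := by
      rw [integrableOn_Ici_iff_integrableOn_Ioi]
      exact (exp_neg_integrableOn_Ioi 0 hρ).const_mul _
    exact Integrable.mono' hdom hmeas (Filter.Eventually.of_forall fun t => hnorm t)
  refine ⟨hintC, ?_⟩
  -- Fubini setup
  set F : ℝ → ℝ → ℂ := fun t u =>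
    (Set.indicator (Set.Ici 0) (fun t' : ℝ => Complex.exp (-z * t')) t) *
      (Set.indicator (Set.Ioi t) (fun u' : ℝ => ((g u' : ℝ) : ℂ)) u) with hF
  have hFuncurry : Function.uncurry F = fun p : ℝ × ℝ =>
      (Set.indicator (Set.Ici 0 ×ˢ (Set.univ : Set ℝ))
        (fun q : ℝ × ℝ => Complex.exp (-z * q.1)) p) *
      (Set.indicator {q : ℝ × ℝ | q.1 < q.2} (fun q : ℝ × ℝ => ((g q.2 : ℝ) : ℂ)) p) := by
    funext p
    rcases p with ⟨t, u⟩
    by_cases h1 : (0:ℝ) ≤ t <;> by_cases h2 : t < u <;>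
      simp [hF, Function.uncurry, Set.indicator_apply, Set.mem_Ioi, Set.mem_Ici, h1, h2]
  have hmeasF : AEStronglyMeasurable (Function.uncurry F) (volume.prod volume) := by
    rw [hFuncurry]
    refine Measurable.aestronglyMeasurable ?_
    refine Measurable.mul ?_ ?_
    · exact Measurable.indicator
        (Complex.measurable_exp.comp (measurable_const.mul
          (Complex.measurable_ofReal.comp measurable_fst)))
        (measurableSet_Ici.prod MeasurableSet.univ)
    · exact Measurable.indicator
        (Complex.measurable_ofReal.comp (hg.comp measurable_snd))
        (measurableSet_lt measurable_fst measurable_snd)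
  have hFt : ∀ t : ℝ, Integrable (F t) volume := by
    intro t
    exact ((integrable_indicator_iff measurableSet_Ioi).mpr ((hgint t).ofReal (𝕜 := ℂ))).const_mul _
  have hnormint : ∀ t : ℝ, (∫ u, ‖F t u‖) =
      Set.indicator (Set.Ici 0) (fun t' => Real.exp (-z.re * t')) t * ∫ u in Set.Ioi t, |g u| := by
    intro t
    have : ∀ u : ℝ, ‖F t u‖ =
        Set.indicator (Set.Ici 0) (fun t' => Real.exp (-z.re * t')) t *
          Set.indicator (Set.Ioi t) (fun u' => |g u'|) u := by
      intro u
      by_cases h1 : (0:ℝ) ≤ t <;> by_cases h2 : t < u <;>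
        simp [hF, Set.indicator_apply, Set.mem_Ioi, Set.mem_Ici, h1, h2, Complex.norm_exp,
          abs_of_nonneg, Complex.norm_real]
    simp only [this]
    rw [integral_const_mul, integral_indicator measurableSet_Ioi]
  have hFint : Integrable (Function.uncurry F) (volume.prod volume) := by
    rw [integrable_prod_iff hmeasF]
    constructor
    · exact Filter.Eventually.of_forall hFt
    · have hdom : IntegrableOn (fun t : ℝ => M / ε * Real.exp (-(z.re + ε) * t))
          (Set.Ici 0) volume := by
        rw [integrableOn_Ici_iff_integrableOn_Ioi]
        exact (exp_neg_integrableOn_Ioi 0 hρ).const_mul _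
      refine Integrable.mono'
        ((integrable_indicator_iff measurableSet_Ici).mpr hdom)
        hmeasF.norm.integral_prod_right'
        (Filter.Eventually.of_forall fun t => ?_)
      rw [Function.uncurry_def]
      show ‖∫ u, ‖F t u‖‖ ≤ _
      rw [Real.norm_of_nonneg (integral_nonneg fun u => norm_nonneg _)]
      rw [hnormint t]
      by_cases h1 : (0:ℝ) ≤ t
      · rw [Set.indicator_of_mem (Set.mem_Ici.mpr h1), Set.indicator_of_mem (Set.mem_Ici.mpr h1)]
        calc Real.exp (-z.re * t) * ∫ u in Set.Ioi t, |g u|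
            ≤ Real.exp (-z.re * t) * (M / ε * Real.exp (-ε * t)) :=
              mul_le_mul_of_nonneg_left (habs t) (Real.exp_nonneg _)
          _ = M / ε * Real.exp (-(z.re + ε) * t) := by
              rw [show -(z.re + ε) * t = -z.re * t + -ε * t by ring, Real.exp_add]; ring
      · rw [Set.indicator_of_notMem (by simpa using h1), Set.indicator_of_notMem (by simpa using h1), zero_mul]
  -- evaluate the iterated integral t-then-u
  have hLHS : (∫ t : ℝ, ∫ u : ℝ, F t u) =
      ∫ t in Set.Ici (0:ℝ), Complex.exp (-z * t) * ((∫ u in Set.Ioi t, g u : ℝ) : ℂ) := by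
    have h1 : ∀ t : ℝ, (∫ u : ℝ, F t u) =
        Set.indicator (Set.Ici 0)
          (fun t' : ℝ => Complex.exp (-z * t') * ((∫ u in Set.Ioi t', g u : ℝ) : ℂ)) t := by
      intro t
      rw [hF]
      simp only
      rw [integral_const_mul, integral_indicator measurableSet_Ioi]
      have hco : (∫ x in Set.Ioi t, ((g x : ℝ) : ℂ)) = ((∫ u in Set.Ioi t, g u : ℝ) : ℂ) :=
        integral_ofReal
      rw [hco]
      by_cases h1 : (0:ℝ) ≤ t
      · rw [Set.indicator_of_mem (Set.mem_Ici.mpr h1), Set.indicator_of_mem (Set.mem_Ici.mpr h1)]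
      · rw [Set.indicator_of_notMem (by simpa using h1),
          Set.indicator_of_notMem (by simpa using h1), zero_mul]
    simp only [h1]
    rw [integral_indicator measurableSet_Ici]
  -- evaluate the iterated integral u-then-t
  have hint2 : IntegrableOn (fun u : ℝ => Complex.exp (-z * u) * ((g u : ℝ) : ℂ))
      (Set.Ioi 0) volume := by
    refine Integrable.mono' ((exp_neg_integrableOn_Ioi 0 hρ).const_mul M)
      ((Complex.measurable_exp.comp (measurable_const.mul Complex.measurable_ofReal)).mul
        (Complex.measurable_ofReal.comp hg)).aestronglyMeasurable.restrict
      (Filter.Eventually.of_forall fun u => ?_)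
    rw [norm_mul, Complex.norm_exp, Complex.norm_real, Real.norm_eq_abs]
    have h1 : (-z * u).re = -z.re * u := by simp
    rw [h1]
    calc Real.exp (-z.re * u) * |g u| ≤ Real.exp (-z.re * u) * (M * Real.exp (-ε * u)) :=
          mul_le_mul_of_nonneg_left (hb u) (Real.exp_nonneg _)
      _ = M * Real.exp (-(z.re + ε) * u) := by
          rw [show -(z.re + ε) * u = -z.re * u + -ε * u by ring, Real.exp_add]; ring
  have hint1 : IntegrableOn (fun u : ℝ => ((g u : ℝ) : ℂ)) (Set.Ioi 0) volume :=
    (hgint 0).ofReal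
  have hRHS : (∫ u : ℝ, ∫ t : ℝ, F t u) =
      z⁻¹ * ((∫ u in Set.Ici (0:ℝ), ((g u : ℝ) : ℂ)) -
        ∫ u in Set.Ici (0:ℝ), Complex.exp (-z * u) * ((g u : ℝ) : ℂ)) := by
    have h1 : ∀ u : ℝ, (∫ t : ℝ, F t u) =
        Set.indicator (Set.Ioi 0)
          (fun u' : ℝ => z⁻¹ * (((g u' : ℝ) : ℂ) - Complex.exp (-z * u') * ((g u' : ℝ) : ℂ)))
          u := by
      intro u
      have h2 : (fun t : ℝ => F t u) =
          Set.indicator (Set.Ico 0 u) (fun t : ℝ => Complex.exp (-z * t) * ((g u : ℝ) : ℂ)) := by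
        funext t
        by_cases ha : (0:ℝ) ≤ t <;> by_cases hb2 : t < u <;>
          simp [hF, Set.indicator_apply, Set.mem_Ioi, Set.mem_Ici, Set.mem_Ico, ha, hb2]
      rw [h2, integral_indicator measurableSet_Ico]
      by_cases hu : (0:ℝ) < u
      · rw [Set.indicator_of_mem (Set.mem_Ioi.mpr hu)]
        rw [setIntegral_congr_set Ico_ae_eq_Ioc, ← intervalIntegral.integral_of_le hu.le]
        rw [intervalIntegral.integral_mul_const, integral_exp_mul_complex (neg_ne_zero.mpr hz0)]
        push_cast
        field_simp [hz0]
        ring_nf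
        simp
      · rw [Set.indicator_of_notMem (by simpa using hu), Set.Ico_eq_empty (by simpa using hu)]
        simp
    simp only [h1]
    rw [integral_indicator measurableSet_Ioi]
    rw [integral_Ici_eq_integral_Ioi, integral_Ici_eq_integral_Ioi]
    rw [← integral_sub hint1 hint2, integral_const_mul]
  rw [← hLHS, integral_integral_swap hFint, hRHS]


/-- With `f` the kernel of the representation theorem,
`C₀ := Iₙ − ∫_0^∞ f` and `C(t) := ∫_t^∞ f(u) du`, for every `z ∈ ℍ_δ, z ≠ 0` the
function `t ↦ e^{−zt} C(t)` is integrable on `[0,∞)` and its integral equals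
`h_η(z)⁻¹ − z⁻¹ C₀`. -/
theorem statement14 {n : ℕ} (hn : 1 ≤ n) (δ : ℝ) (hδ : 0 < δ)
    (η : Matrix (Fin n) (Fin n) (SignedMeasure ℝ))
    (hsupp : SuppNonneg η) (hmom : ExpMoment δ η)
    (G : ℂ → Matrix (Fin n) (Fin n) ℂ) (hC : CondC δ η G)
    (f : ℝ → Matrix (Fin n) (Fin n) ℝ) (hf : FSpec δ G f) :
    ∀ z : ℂ, -δ < z.re → z ≠ 0 →
      (∀ i j, IntegrableOn
        (fun t : ℝ => Complex.exp (-z * t) * ((∫ u in Set.Ioi t, f u i j : ℝ) : ℂ))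
        (Set.Ici 0) volume) ∧
      ∀ i j,
        (∫ t in Set.Ici (0 : ℝ),
            Complex.exp (-z * t) * ((∫ u in Set.Ioi t, f u i j : ℝ) : ℂ)) =
          ((hEta η z)⁻¹ - z⁻¹ •
            (((1 : Matrix (Fin n) (Fin n) ℝ) -
              Matrix.of fun i j => ∫ u in Set.Ici (0 : ℝ), f u i j).map Complex.ofReal)) i j := by
  intro z hz hz0
  -- choose a decay rate ε
  set m : ℝ := max 0 (-z.re) with hm
  have hmδ : m < δ := by
    apply max_lt hδ; linarith
  set ε : ℝ := (m + δ) / 2 with hεdef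
  have hε : 0 < ε := by
    have : (0:ℝ) ≤ m := le_max_left _ _
    simp only [hεdef]; linarith
  have hεδ : ε < δ := by simp only [hεdef]; linarith
  have hzε : -ε < z.re := by
    have h1 : -z.re ≤ m := le_max_right _ _
    have : m < ε := by simp only [hεdef]; linarith
    linarith
  obtain ⟨M, hM⟩ := hf.2.2.1 ε hε hεδ
  have hbd : ∀ i j, ∀ t : ℝ, |f t i j| ≤ M * Real.exp (-ε * t) := by
    intro i j t
    have hM0 : 0 ≤ M := by
      have h := hM 0 le_rfl
      have h2 : 0 ≤ frobR (f 0) := Real.sqrt_nonneg _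
      simpa using le_trans (by simpa using h2) h
    rcases lt_or_ge t 0 with ht | ht
    · rw [hf.2.1 t ht]
      simp only [Matrix.zero_apply, abs_zero]
      positivity
    · have h1 : |f t i j| ≤ frobR (f t) := by
        rw [frobR, ← Real.sqrt_sq_eq_abs]
        apply Real.sqrt_le_sqrt
        calc f t i j ^ 2 ≤ ∑ j', f t i j' ^ 2 :=
              Finset.single_le_sum (f := fun j' => f t i j' ^ 2)
                (fun _ _ => sq_nonneg _) (Finset.mem_univ j)
          _ ≤ ∑ i', ∑ j', f t i' j' ^ 2 :=
              Finset.single_le_sum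
                (f := fun i' => ∑ j', f t i' j' ^ 2)
                (fun _ _ => Finset.sum_nonneg fun _ _ => sq_nonneg _) (Finset.mem_univ i)
      have h2 : frobR (f t) ≤ M * Real.exp (-ε * t) := by
        have h3 := hM t ht
        have h4 : 0 < Real.exp (ε * t) := Real.exp_pos _
        rw [show -ε * t = -(ε * t) by ring, Real.exp_neg, mul_comm M, ← div_eq_inv_mul]
        rw [le_div_iff₀ h4]
        linarith [h3, mul_comm (Real.exp (ε * t)) (frobR (f t))]
      exact h1.trans h2
  have key : ∀ i j, IntegrableOn
      (fun t : ℝ => Complex.exp (-z * t) * ((∫ u in Set.Ioi t, f u i j : ℝ) : ℂ))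
      (Set.Ici 0) volume ∧
      (∫ t in Set.Ici (0 : ℝ), Complex.exp (-z * t) * ((∫ u in Set.Ioi t, f u i j : ℝ) : ℂ)) =
        z⁻¹ * ((∫ u in Set.Ici (0 : ℝ), ((f u i j : ℝ) : ℂ)) -
          ∫ u in Set.Ici (0 : ℝ), Complex.exp (-z * u) * ((f u i j : ℝ) : ℂ)) :=
    fun i j => aux_scalar_main (hf.1 i j) hε (hbd i j) z hzε hz0
  refine ⟨fun i j => (key i j).1, fun i j => ?_⟩
  rw [(key i j).2]
  -- Laplace transform identities from FSpec
  have hFz := hf.2.2.2 z hz i j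
  have hF0 := hf.2.2.2 0 (by simpa using hδ) i j
  simp only [neg_zero, zero_mul, Complex.exp_zero, one_mul] at hF0
  have hco : (∫ u in Set.Ici (0:ℝ), ((f u i j : ℝ) : ℂ))
      = ((∫ u in Set.Ici (0:ℝ), f u i j : ℝ) : ℂ) := integral_ofReal
  have hofr : ((∫ u in Set.Ici (0:ℝ), f u i j : ℝ) : ℂ)
      = ((1 : Matrix (Fin n) (Fin n) ℂ) - G 0) i j := by rw [← hco, hF0]
  have hGz := hC.2.2 z hz hz0
  have hinv : G z i j = z * (hEta η z)⁻¹ i j := by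
    rw [hGz]; simp [Matrix.smul_apply, smul_eq_mul]
  have hone : (((1 : Matrix (Fin n) (Fin n) ℝ) i j : ℝ) : ℂ)
      = (1 : Matrix (Fin n) (Fin n) ℂ) i j := by
    by_cases hij : i = j <;> simp [Matrix.one_apply, hij]
  rw [hco, hFz, hofr]
  simp only [Matrix.sub_apply, Matrix.smul_apply, Matrix.map_apply, Matrix.of_apply,
    smul_eq_mul, Complex.ofReal_sub]
  rw [hofr, hone, hinv]
  simp only [Matrix.sub_apply]
  field_simp
  ring
end
end

section
/- Suppose the signed n×n matrix measure η has a δ-exponential moment and satisfies Condition (C), let f be as specified, and define C₀ := I_n − ∫_0^∞ f(u) du, C(t) := ∫_t^∞ f(u) du, and C̃(t) := C₀ + C(t) for t ≥ 0. Then C̃(0) = I_n and for all 0 ≤ s < t, C̃(t) − C̃(s) = ∫_s^t (∫_{[0,u]} C̃(u−v) η(dv)) du, where (∫_{[0,u]} C̃(u−v) η(dv))_ij = Σ_{k=1}^n ∫_{[0,u]} C̃_ik(u−v) η_kj(dv). -/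
open MeasureTheory Matrix Complex Set

noncomputable section

section Statement15Aux

open Filter

namespace S15

lemma norm_cexp_neg_mul (z : ℂ) (t : ℝ) : ‖Complex.exp (-z * t)‖ = Real.exp (-z.re * t) := by
  rw [Complex.norm_exp]; norm_num [Complex.mul_re]

lemma cexpIntOn (z : ℂ) (hz : 0 < z.re) (a : ℝ) :
    MeasureTheory.IntegrableOn (fun t : ℝ => Complex.exp (-z * t)) (Set.Ioi a) := by
  refine (exp_neg_integrableOn_Ioi a hz).mono' ?_ ?_
  · exact (Complex.continuous_exp.comp
      (continuous_const.mul Complex.continuous_ofReal)).aestronglyMeasurable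
  · filter_upwards with t; rw [norm_cexp_neg_mul]

lemma cexpDeriv (z : ℂ) (hz : z ≠ 0) (x : ℝ) :
    HasDerivAt (fun t : ℝ => -Complex.exp (-z * t) / z) (Complex.exp (-z * x)) x := by
  have h1 : HasDerivAt (fun t : ℂ => -Complex.exp (-z * t) / z) (Complex.exp (-z * x)) x := by
    have h : HasDerivAt (fun t : ℂ => Complex.exp (-z * t)) (-z * Complex.exp (-z * x)) x := by
      simpa [mul_comm] using ((hasDerivAt_id (x : ℂ)).const_mul (-z)).cexp
    have h2 := h.neg.div_const z
    have : -(-z * Complex.exp (-z * x)) / z = Complex.exp (-z * x) := by field_simp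
    rwa [this] at h2
  exact h1.comp_ofReal

lemma cexp_tendsto (z : ℂ) (hz : 0 < z.re) :
    Tendsto (fun x : ℝ => Complex.exp (-z * x)) atTop (nhds 0) := by
  rw [tendsto_zero_iff_norm_tendsto_zero]
  simp only [norm_cexp_neg_mul]
  exact Real.tendsto_exp_atBot.comp
    (Tendsto.const_mul_atTop_of_neg (neg_neg_iff_pos.mpr hz) tendsto_id)

lemma integral_cexp_Ioi (z : ℂ) (hz : 0 < z.re) (a : ℝ) :
    ∫ t in Set.Ioi a, Complex.exp (-z * t) = Complex.exp (-z * a) / z := by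
  have hz0 : z ≠ 0 := fun h => by simp [h] at hz
  have := MeasureTheory.integral_Ioi_of_hasDerivAt_of_tendsto
    (f := fun t : ℝ => -Complex.exp (-z * t) / z)
    (f' := fun t : ℝ => Complex.exp (-z * t)) (a := a) (m := 0)
    ((cexpDeriv z hz0 a).continuousAt).continuousWithinAt
    (fun x _ => cexpDeriv z hz0 x) (cexpIntOn z hz a) ?_
  · rw [this]; ring
  · simpa [neg_div] using ((cexp_tendsto z hz).div_const z).neg

lemma aux_t_exp {a : ℝ} (ha : 0 < a) :
    MeasureTheory.IntegrableOn (fun t : ℝ => t * Real.exp (-a * t)) (Set.Ioi 0) := by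
  have h2 : MeasureTheory.IntegrableOn (fun t : ℝ => (2 / a) * Real.exp (-(a / 2) * t))
      (Set.Ioi 0) := (exp_neg_integrableOn_Ioi 0 (by linarith)).const_mul _
  refine h2.mono' ((measurable_id.mul (by fun_prop)).aestronglyMeasurable) ?_
  filter_upwards [MeasureTheory.ae_restrict_mem measurableSet_Ioi] with t ht
  have ht0 : (0 : ℝ) < t := ht
  have h3 : t ≤ (2 / a) * Real.exp ((a / 2) * t) := by
    have h4 := Real.add_one_le_exp ((a / 2) * t)
    calc t = (2 / a) * (a / 2 * t) := by field_simp
      _ ≤ (2 / a) * Real.exp ((a / 2) * t) :=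
          mul_le_mul_of_nonneg_left (by linarith) (by positivity)
  rw [_root_.Real.norm_eq_abs, _root_.abs_of_nonneg (by positivity : (0:ℝ) ≤ t * Real.exp (-a * t))]
  calc t * Real.exp (-a * t) ≤ ((2 / a) * Real.exp ((a / 2) * t)) * Real.exp (-a * t) := by
        apply mul_le_mul_of_nonneg_right h3 (Real.exp_pos _).le
    _ = (2 / a) * Real.exp (-(a / 2) * t) := by
        rw [mul_assoc, ← Real.exp_add]; ring_nf

lemma shift_Ici (v : ℝ) (h : ℝ → ℂ) : ∫ u in Set.Ici v, h (u - v) = ∫ u in Set.Ici 0, h u := by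
  rw [← MeasureTheory.integral_indicator measurableSet_Ici,
    ← MeasureTheory.integral_indicator measurableSet_Ici,
    ← MeasureTheory.integral_add_right_eq_self (μ := MeasureTheory.volume)
      ((Set.Ici v).indicator fun u => h (u - v)) v]
  congr 1; ext x
  by_cases hx : 0 ≤ x <;> simp [Set.indicator, hx]

lemma setInt_zero_of_neg (w : ℝ → ℝ) (hw : ∀ u < (0 : ℝ), w u = 0) {s : Set ℝ}
    (hsm : MeasurableSet s) (hs : s ⊆ Set.Iic 0) : ∫ u in s, w u = 0 := by
  have h2 : ∀ᵐ u : ℝ ∂MeasureTheory.volume, u ≠ 0 := by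
    rw [MeasureTheory.ae_iff]
    have hset : {a : ℝ | ¬ a ≠ 0} = {0} := by ext x; simp
    rw [hset]
    exact Real.volume_singleton
  refine MeasureTheory.integral_eq_zero_of_ae ?_
  filter_upwards [MeasureTheory.ae_restrict_mem hsm, MeasureTheory.ae_restrict_of_ae h2]
    with u hu hne
  simpa using hw u (lt_of_le_of_ne (hs hu) hne)

lemma int_cexp_mul (z : ℂ) (hz : 0 < z.re) (ψ : ℝ → ℂ)
    (hm : MeasureTheory.AEStronglyMeasurable ψ (MeasureTheory.volume.restrict (Set.Ioi 0)))
    (K : ℝ) (hK : ∀ u, ‖ψ u‖ ≤ K) :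
    MeasureTheory.IntegrableOn (fun u : ℝ => Complex.exp (-z * u) * ψ u) (Set.Ioi (0 : ℝ)) := by
  refine MeasureTheory.Integrable.mono' ((exp_neg_integrableOn_Ioi 0 hz).mul_const K)
    (((Complex.continuous_exp.comp
      (continuous_const.mul Complex.continuous_ofReal)).aestronglyMeasurable).mul hm) ?_
  refine MeasureTheory.ae_of_all _ fun u => ?_
  rw [norm_mul, norm_cexp_neg_mul]
  exact mul_le_mul_of_nonneg_left (hK u) (Real.exp_pos _).le

lemma laplace_primitive (z : ℂ) (hz : 0 < z.re) (w : ℝ → ℂ) (hw : Measurable w)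
    (K : ℝ) (hK : ∀ t, ‖w t‖ ≤ K) :
    ∫ t in Set.Ioi (0:ℝ), Complex.exp (-z * t) * (∫ u in Set.Ioc (0:ℝ) t, w u) =
      z⁻¹ * ∫ u in Set.Ioi (0:ℝ), Complex.exp (-z * u) * w u := by
  have hz0 : z ≠ 0 := fun h => by simp [h] at hz
  have hK0 : 0 ≤ K := le_trans (norm_nonneg _) (hK 0)
  set ν : MeasureTheory.Measure ℝ := MeasureTheory.volume.restrict (Set.Ioi 0) with hν
  set F : ℝ → ℝ → ℂ := fun t u => Complex.exp (-z * t) * (Set.Iic t).indicator w u with hF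
  have hFeq : Function.uncurry F = fun p : ℝ × ℝ =>
      Complex.exp (-z * p.1) * ({q : ℝ × ℝ | q.2 ≤ q.1}.indicator (fun q => w q.2) p) := by
    ext p
    by_cases h : p.2 ≤ p.1 <;> simp [Function.uncurry, hF, Set.indicator, h]
  have hS : MeasurableSet {q : ℝ × ℝ | q.2 ≤ q.1} :=
    (isClosed_le continuous_snd continuous_fst).measurableSet
  have hSM : MeasureTheory.StronglyMeasurable (Function.uncurry F) := by
    rw [hFeq]
    exact ((Complex.continuous_exp.comp (continuous_const.mul
        (Complex.continuous_ofReal.comp continuous_fst))).stronglyMeasurable).mul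
      (((hw.comp measurable_snd).stronglyMeasurable).indicator hS)
  have hsec : ∀ t : ℝ, MeasureTheory.Integrable (F t) ν := by
    intro t
    apply MeasureTheory.Integrable.const_mul
    rw [MeasureTheory.integrable_indicator_iff measurableSet_Iic]
    have : ν.restrict (Set.Iic t) = MeasureTheory.volume.restrict (Set.Ioc 0 t) := by
      rw [hν, MeasureTheory.Measure.restrict_restrict measurableSet_Iic, Set.inter_comm,
        Set.Ioi_inter_Iic]
    rw [MeasureTheory.IntegrableOn, this]
    refine MeasureTheory.Integrable.mono' (g := fun _ => K)
      (MeasureTheory.integrableOn_const measure_Ioc_lt_top.ne)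
      hw.aestronglyMeasurable ?_
    exact MeasureTheory.ae_of_all _ hK
  have h2nd : MeasureTheory.Integrable (fun t => ∫ u, ‖F t u‖ ∂ν) ν := by
    have hsm2 : MeasureTheory.AEStronglyMeasurable (fun t => ∫ u, ‖F t u‖ ∂ν) ν :=
      (hSM.norm.integral_prod_right').aestronglyMeasurable
    refine MeasureTheory.Integrable.mono' ((aux_t_exp hz).const_mul K) hsm2 ?_
    filter_upwards [MeasureTheory.ae_restrict_mem measurableSet_Ioi] with t ht
    have ht0 : (0:ℝ) < t := ht
    have key : ∫ u, ‖F t u‖ ∂ν ≤ Real.exp (-z.re * t) * (K * t) := by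
      have hb : ∀ u, ‖F t u‖ ≤ Real.exp (-z.re * t) * (Set.Iic t).indicator (fun _ => K) u := by
        intro u
        rw [hF]
        simp only [norm_mul, norm_cexp_neg_mul]
        by_cases h : u ∈ Set.Iic t
        · simp only [Set.indicator_of_mem h]
          exact mul_le_mul_of_nonneg_left (hK u) (Real.exp_pos _).le
        · simp [Set.indicator_of_notMem h]
      have hint2 : MeasureTheory.Integrable
          (fun u => Real.exp (-z.re * t) * (Set.Iic t).indicator (fun _ => K) u) ν := by
        apply MeasureTheory.Integrable.const_mul
        rw [MeasureTheory.integrable_indicator_iff measurableSet_Iic]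
        refine MeasureTheory.integrableOn_const (ne_of_lt ?_)
        rw [hν, MeasureTheory.Measure.restrict_apply measurableSet_Iic, Set.inter_comm,
          Set.Ioi_inter_Iic]
        exact measure_Ioc_lt_top
      calc ∫ u, ‖F t u‖ ∂ν
          ≤ ∫ u, Real.exp (-z.re * t) * (Set.Iic t).indicator (fun _ => K) u ∂ν :=
            MeasureTheory.integral_mono_of_nonneg
              (MeasureTheory.ae_of_all _ fun u => norm_nonneg _) hint2
              (MeasureTheory.ae_of_all _ hb)
        _ = Real.exp (-z.re * t) * (K * t) := by
            rw [MeasureTheory.integral_const_mul,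
              MeasureTheory.integral_indicator_const _ measurableSet_Iic]
            rw [hν, MeasureTheory.Measure.real, MeasureTheory.Measure.restrict_apply measurableSet_Iic, Set.inter_comm,
              Set.Ioi_inter_Iic, Real.volume_Ioc]
            rw [ENNReal.toReal_ofReal (by linarith)]
            simp [smul_eq_mul]
            ring
    rw [_root_.Real.norm_eq_abs,
      _root_.abs_of_nonneg (MeasureTheory.integral_nonneg fun u => norm_nonneg _)]
    calc ∫ u, ‖F t u‖ ∂ν ≤ Real.exp (-z.re * t) * (K * t) := key
      _ = K * (t * Real.exp (-z.re * t)) := by ring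
  have hint : MeasureTheory.Integrable (Function.uncurry F) (ν.prod ν) :=
    (MeasureTheory.integrable_prod_iff hSM.aestronglyMeasurable).2
      ⟨MeasureTheory.ae_of_all _ hsec, h2nd⟩
  have stepA : ∀ t : ℝ,
      Complex.exp (-z * t) * (∫ u in Set.Ioc (0:ℝ) t, w u) = ∫ u, F t u ∂ν := by
    intro t
    rw [hF]
    simp only
    rw [MeasureTheory.integral_const_mul]
    congr 1
    rw [hν, MeasureTheory.integral_indicator measurableSet_Iic,
      MeasureTheory.Measure.restrict_restrict measurableSet_Iic, Set.inter_comm,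
      Set.Ioi_inter_Iic]
  have swap : ∫ t, (∫ u, F t u ∂ν) ∂ν = ∫ u, (∫ t, F t u ∂ν) ∂ν :=
    MeasureTheory.integral_integral_swap hint
  have stepB : ∀ᵐ u ∂ν, (∫ t, F t u ∂ν) = z⁻¹ * (Complex.exp (-z * u) * w u) := by
    filter_upwards [MeasureTheory.ae_restrict_mem measurableSet_Ioi] with u hu
    have hu0 : (0:ℝ) < u := hu
    have hFu : ∀ t, F t u = (Set.Ici u).indicator (fun t => Complex.exp (-z * t) * w u) t := by
      intro t
      by_cases h : u ≤ t <;>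
        simp [hF, Set.indicator, h, Set.mem_Ici, Set.mem_Iic]
    calc ∫ t, F t u ∂ν
        = ∫ t in Set.Ioi (0:ℝ),
            (Set.Ici u).indicator (fun t => Complex.exp (-z * t) * w u) t := by
          rw [hν]; exact MeasureTheory.integral_congr_ae (MeasureTheory.ae_of_all _ hFu)
      _ = ∫ t in Set.Ioi (0:ℝ) ∩ Set.Ici u, Complex.exp (-z * t) * w u :=
          MeasureTheory.setIntegral_indicator measurableSet_Ici
      _ = ∫ t in Set.Ici u, Complex.exp (-z * t) * w u := by
          rw [show Set.Ioi (0:ℝ) ∩ Set.Ici u = Set.Ici u from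
            Set.inter_eq_self_of_subset_right (fun x hx => lt_of_lt_of_le hu0 hx)]
      _ = (∫ t in Set.Ici u, Complex.exp (-z * t)) * w u := by
          rw [MeasureTheory.integral_mul_const]
      _ = z⁻¹ * (Complex.exp (-z * u) * w u) := by
          rw [MeasureTheory.integral_Ici_eq_integral_Ioi, integral_cexp_Ioi z hz,
            div_eq_inv_mul, mul_assoc]
  calc ∫ t in Set.Ioi (0:ℝ), Complex.exp (-z * t) * (∫ u in Set.Ioc (0:ℝ) t, w u)
      = ∫ t, (∫ u, F t u ∂ν) ∂ν := by
        rw [hν]; exact MeasureTheory.integral_congr_ae (MeasureTheory.ae_of_all _ stepA)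
    _ = ∫ u, (∫ t, F t u ∂ν) ∂ν := swap
    _ = ∫ u, z⁻¹ * (Complex.exp (-z * u) * w u) ∂ν := MeasureTheory.integral_congr_ae stepB
    _ = z⁻¹ * ∫ u in Set.Ioi (0:ℝ), Complex.exp (-z * u) * w u := by
        rw [MeasureTheory.integral_const_mul]

lemma laplace_conv (z : ℂ) (hz : 0 < z.re) (μ : MeasureTheory.Measure ℝ)
    [MeasureTheory.IsFiniteMeasure μ]
    (φ : ℝ → ℂ) (hφm : Measurable φ) (K : ℝ) (hK : ∀ t, ‖φ t‖ ≤ K) :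
    ∫ u in Set.Ioi (0:ℝ), Complex.exp (-z * u) * (∫ v in Set.Icc (0:ℝ) u, φ (u - v) ∂μ) =
      (∫ t in Set.Ioi (0:ℝ), Complex.exp (-z * t) * φ t) *
        (∫ v in Set.Ici (0:ℝ), Complex.exp (-z * v) ∂μ) := by
  have hK0 : 0 ≤ K := le_trans (norm_nonneg _) (hK 0)
  set ν : MeasureTheory.Measure ℝ := MeasureTheory.volume.restrict (Set.Ioi 0) with hν
  set μ' : MeasureTheory.Measure ℝ := μ.restrict (Set.Ici 0) with hμ'
  set Φ : ℂ := ∫ t in Set.Ioi (0:ℝ), Complex.exp (-z * t) * φ t with hΦ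
  set F : ℝ → ℝ → ℂ :=
    fun u v => Complex.exp (-z * u) * (Set.Iic u).indicator (fun v => φ (u - v)) v with hF
  have hS : MeasurableSet {q : ℝ × ℝ | q.2 ≤ q.1} :=
    (isClosed_le continuous_snd continuous_fst).measurableSet
  have hFeq : Function.uncurry F = fun p : ℝ × ℝ =>
      Complex.exp (-z * p.1) *
        ({q : ℝ × ℝ | q.2 ≤ q.1}.indicator (fun q => φ (q.1 - q.2)) p) := by
    ext p
    by_cases h : p.2 ≤ p.1 <;> simp [Function.uncurry, hF, Set.indicator, h]
  have hSM : MeasureTheory.StronglyMeasurable (Function.uncurry F) := by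
    rw [hFeq]
    exact ((Complex.continuous_exp.comp (continuous_const.mul
        (Complex.continuous_ofReal.comp continuous_fst))).stronglyMeasurable).mul
      (((hφm.comp (measurable_fst.sub measurable_snd)).stronglyMeasurable).indicator hS)
  have hsec : ∀ u : ℝ, MeasureTheory.Integrable (F u) μ' := by
    intro u
    apply MeasureTheory.Integrable.const_mul
    refine MeasureTheory.Integrable.mono' (MeasureTheory.integrable_const K)
      (((hφm.comp (measurable_const.sub measurable_id)).stronglyMeasurable).indicator
        measurableSet_Iic).aestronglyMeasurable ?_
    refine MeasureTheory.ae_of_all _ fun v => ?_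
    exact le_trans (norm_indicator_le_norm_self _ _) (hK _)
  have h2nd : MeasureTheory.Integrable (fun u => ∫ v, ‖F u v‖ ∂μ') ν := by
    have hsm2 : MeasureTheory.AEStronglyMeasurable (fun u => ∫ v, ‖F u v‖ ∂μ') ν :=
      (hSM.norm.integral_prod_right').aestronglyMeasurable
    refine MeasureTheory.Integrable.mono'
      ((exp_neg_integrableOn_Ioi 0 hz).mul_const (K * (μ' Set.univ).toReal)) hsm2 ?_
    refine MeasureTheory.ae_of_all _ fun u => ?_
    rw [_root_.Real.norm_eq_abs,
      _root_.abs_of_nonneg (MeasureTheory.integral_nonneg fun v => norm_nonneg _)]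
    have hb : ∀ v, ‖F u v‖ ≤ Real.exp (-z.re * u) * K := by
      intro v
      rw [hF]
      simp only [norm_mul, norm_cexp_neg_mul]
      exact mul_le_mul_of_nonneg_left
        (le_trans (norm_indicator_le_norm_self _ _) (hK _)) (Real.exp_pos _).le
    calc ∫ v, ‖F u v‖ ∂μ' ≤ ∫ _, Real.exp (-z.re * u) * K ∂μ' :=
          MeasureTheory.integral_mono_of_nonneg
            (MeasureTheory.ae_of_all _ fun v => norm_nonneg _)
            (MeasureTheory.integrable_const _) (MeasureTheory.ae_of_all _ hb)
      _ = Real.exp (-z.re * u) * K * (μ' Set.univ).toReal := by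
          rw [MeasureTheory.integral_const]; simp [smul_eq_mul, Measure.real]; ring
      _ = Real.exp (-z.re * u) * (K * (μ' Set.univ).toReal) := by ring
  have hint : MeasureTheory.Integrable (Function.uncurry F) (ν.prod μ') :=
    (MeasureTheory.integrable_prod_iff hSM.aestronglyMeasurable).2
      ⟨MeasureTheory.ae_of_all _ hsec, h2nd⟩
  have stepA : ∀ u : ℝ, Complex.exp (-z * u) * (∫ v in Set.Icc (0:ℝ) u, φ (u - v) ∂μ)
      = ∫ v, F u v ∂μ' := by
    intro u
    rw [hF]
    simp only
    rw [MeasureTheory.integral_const_mul]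
    congr 1
    rw [hμ', MeasureTheory.integral_indicator measurableSet_Iic,
      MeasureTheory.Measure.restrict_restrict measurableSet_Iic, Set.inter_comm,
      Set.Ici_inter_Iic]
  have swap : ∫ u, (∫ v, F u v ∂μ') ∂ν = ∫ v, (∫ u, F u v ∂ν) ∂μ' :=
    MeasureTheory.integral_integral_swap hint
  have stepB : ∀ᵐ v ∂μ', (∫ u, F u v ∂ν) = Complex.exp (-z * v) * Φ := by
    filter_upwards [MeasureTheory.ae_restrict_mem measurableSet_Ici] with v hv
    have hv0 : (0:ℝ) ≤ v := hv
    have hFu : ∀ u, F u v =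
        (Set.Ici v).indicator (fun u => Complex.exp (-z * u) * φ (u - v)) u := by
      intro u
      by_cases h : v ≤ u <;>
        simp [hF, Set.indicator, h, Set.mem_Ici, Set.mem_Iic]
    have hsets : (Set.Ioi (0:ℝ) ∩ Set.Ici v : Set ℝ) =ᵐ[MeasureTheory.volume]
        (Set.Ici v : Set ℝ) := by
      rw [Filter.eventuallyEq_set]
      have hsub : {x : ℝ | x ∈ Set.Ioi 0 ∩ Set.Ici v ↔ x ∈ Set.Ici v}ᶜ ⊆ {v} := by
        intro x hx
        simp only [Set.mem_compl_iff, Set.mem_setOf_eq, Set.mem_inter_iff, Set.mem_Ioi,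
          Set.mem_Ici, not_iff] at hx
        have h1 : v ≤ x := by
          by_contra h
          rw [iff_iff_implies_and_implies] at hx
          tauto
        have h2 : ¬ (0 < x) := by
          intro h0
          rw [iff_iff_implies_and_implies] at hx
          tauto
        have : x = v := le_antisymm (by linarith) h1
        simp [this]
      exact MeasureTheory.measure_mono_null (by simpa using hsub)
        (MeasureTheory.measure_singleton v)
    calc ∫ u, F u v ∂ν
        = ∫ u in Set.Ioi (0:ℝ),
            (Set.Ici v).indicator (fun u => Complex.exp (-z * u) * φ (u - v)) u := by
          rw [hν]; exact MeasureTheory.integral_congr_ae (MeasureTheory.ae_of_all _ hFu)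
      _ = ∫ u in Set.Ioi (0:ℝ) ∩ Set.Ici v, Complex.exp (-z * u) * φ (u - v) :=
          MeasureTheory.setIntegral_indicator measurableSet_Ici
      _ = ∫ u in Set.Ici v, Complex.exp (-z * u) * φ (u - v) :=
          MeasureTheory.setIntegral_congr_set hsets
      _ = ∫ w in Set.Ici (0:ℝ), Complex.exp (-z * (w + v)) * φ w := by
          rw [← shift_Ici v (fun w => Complex.exp (-z * (w + v)) * φ w)]
          apply MeasureTheory.setIntegral_congr_fun measurableSet_Ici
          intro u _
          simp only
          norm_num [sub_add_cancel]
      _ = Complex.exp (-z * v) * Φ := by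
          rw [hΦ, ← MeasureTheory.integral_Ici_eq_integral_Ioi,
            ← MeasureTheory.integral_const_mul]
          congr 1; ext w
          rw [← mul_assoc, ← Complex.exp_add]
          push_cast
          ring_nf
  calc ∫ u in Set.Ioi (0:ℝ), Complex.exp (-z * u) * (∫ v in Set.Icc (0:ℝ) u, φ (u - v) ∂μ)
      = ∫ u, (∫ v, F u v ∂μ') ∂ν := by
        rw [hν]; exact MeasureTheory.integral_congr_ae (MeasureTheory.ae_of_all _ stepA)
    _ = ∫ v, (∫ u, F u v ∂ν) ∂μ' := swap
    _ = ∫ v, Complex.exp (-z * v) * Φ ∂μ' := MeasureTheory.integral_congr_ae stepB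
    _ = (∫ v in Set.Ici (0:ℝ), Complex.exp (-z * v) ∂μ) * Φ := by
        rw [MeasureTheory.integral_mul_const]
    _ = Φ * (∫ v in Set.Ici (0:ℝ), Complex.exp (-z * v) ∂μ) := mul_comm _ _

lemma conv_measurable (μ : MeasureTheory.Measure ℝ) [MeasureTheory.IsFiniteMeasure μ]
    (φ : ℝ → ℝ) (hφ : Measurable φ) :
    Measurable fun u => ∫ v in Set.Icc (0:ℝ) u, φ (u - v) ∂μ := by
  have hT : MeasurableSet {q : ℝ × ℝ | 0 ≤ q.2 ∧ q.2 ≤ q.1} :=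
    ((isClosed_le continuous_const continuous_snd).inter
      (isClosed_le continuous_snd continuous_fst)).measurableSet
  have key : (fun u => ∫ v in Set.Icc (0:ℝ) u, φ (u - v) ∂μ) =
      fun u => ∫ v, ({q : ℝ × ℝ | 0 ≤ q.2 ∧ q.2 ≤ q.1}.indicator
        (fun q => φ (q.1 - q.2))) (u, v) ∂μ := by
    funext u
    rw [← MeasureTheory.integral_indicator measurableSet_Icc]
    congr 1
  rw [key]
  exact (MeasureTheory.StronglyMeasurable.integral_prod_right'
    (((hφ.comp (measurable_fst.sub measurable_snd)).stronglyMeasurable).indicator hT)).measurable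

open FourierTransform in
lemma laplace_uniq (F : ℝ → ℝ) (hF : Continuous F) (h0 : ∀ t ≤ (0:ℝ), F t = 0) (K : ℝ)
    (hK : ∀ t, 0 ≤ t → |F t| ≤ K * t)
    (hlap : ∀ z : ℂ, 0 < z.re →
      ∫ t in Set.Ioi (0:ℝ), Complex.exp (-z * t) * (F t : ℂ) = 0) :
    ∀ t, F t = 0 := by
  set v : ℝ → ℂ := fun t => Complex.exp (-(1:ℂ) * t) * (F t : ℂ) with hv
  have hvcont : Continuous v :=
    (Complex.continuous_exp.comp (continuous_const.mul Complex.continuous_ofReal)).mul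
      (Complex.continuous_ofReal.comp hF)
  have hvnorm : ∀ t, ‖v t‖ = Real.exp (-t) * |F t| := by
    intro t
    rw [hv]
    simp only [norm_mul, norm_cexp_neg_mul]
    norm_num
  have hvint : MeasureTheory.Integrable v := by
    have h1 : MeasureTheory.IntegrableOn v (Set.Iic 0) := by
      have : Set.EqOn v 0 (Set.Iic 0) := fun t ht => by
        simp [hv, h0 t ht]
      exact (MeasureTheory.integrableOn_congr_fun this measurableSet_Iic).mpr
        MeasureTheory.integrableOn_zero
    have h2 : MeasureTheory.IntegrableOn v (Set.Ioi 0) := by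
      refine MeasureTheory.Integrable.mono' ((aux_t_exp one_pos).const_mul K)
        hvcont.aestronglyMeasurable ?_
      filter_upwards [MeasureTheory.ae_restrict_mem measurableSet_Ioi] with t ht
      have ht0 : (0:ℝ) < t := ht
      rw [hvnorm t]
      calc Real.exp (-t) * |F t| ≤ Real.exp (-t) * (K * t) :=
            mul_le_mul_of_nonneg_left (hK t ht0.le) (Real.exp_pos _).le
        _ = K * (t * Real.exp (-1 * t)) := by ring_nf
    have := h1.union h2
    rwa [Set.Iic_union_Ioi, MeasureTheory.integrableOn_univ] at this
  have hfour : 𝓕 v = 0 := by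
    funext ξ
    rw [Real.fourier_real_eq_integral_exp_smul]
    set z : ℂ := 1 + (2 * Real.pi * ξ) * Complex.I with hz
    have hzre : 0 < z.re := by simp [hz]
    have hint2 : MeasureTheory.Integrable (fun x : ℝ => Complex.exp (-z * x) * (F x : ℂ)) := by
      refine MeasureTheory.Integrable.mono' hvint.norm
        (((Complex.continuous_exp.comp (continuous_const.mul Complex.continuous_ofReal)).mul
          (Complex.continuous_ofReal.comp hF)).aestronglyMeasurable) ?_
      refine MeasureTheory.ae_of_all _ fun x => ?_
      rw [norm_mul, norm_cexp_neg_mul, hvnorm x]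
      simp only [hz, Complex.add_re, Complex.one_re, Complex.mul_re, Complex.I_re, Complex.I_im]
      norm_num
    have heq : ∀ x : ℝ, Complex.exp (↑(-2 * Real.pi * x * ξ) * Complex.I) • v x =
        Complex.exp (-z * x) * (F x : ℂ) := by
      intro x
      rw [hv, smul_eq_mul, ← mul_assoc, ← Complex.exp_add]
      congr 2
      push_cast
      ring
    rw [MeasureTheory.integral_congr_ae (MeasureTheory.ae_of_all _ heq)]
    have hsplit : ∫ x : ℝ, Complex.exp (-z * x) * (F x : ℂ) =
        (∫ x in Set.Iic (0:ℝ), Complex.exp (-z * x) * (F x : ℂ)) +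
          ∫ x in Set.Ioi (0:ℝ), Complex.exp (-z * x) * (F x : ℂ) := by
      rw [← MeasureTheory.setIntegral_univ, ← Set.Iic_union_Ioi (a := (0:ℝ)),
        MeasureTheory.setIntegral_union (Set.Iic_disjoint_Ioi le_rfl) measurableSet_Ioi
          hint2.integrableOn hint2.integrableOn]
    rw [hsplit, hlap z hzre]
    have hIic : ∫ x in Set.Iic (0:ℝ), Complex.exp (-z * x) * (F x : ℂ) = 0 := by
      rw [MeasureTheory.setIntegral_congr_fun measurableSet_Iic
        (fun x hx => by simp [h0 x hx] : Set.EqOn _ (fun _ => (0:ℂ)) (Set.Iic (0:ℝ)))]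
      simp
    rw [hIic]
    simp
  have hinv := hvcont.fourierInv_fourier_eq hvint
    (by rw [hfour]; exact MeasureTheory.integrable_zero _ _ _)
  rw [hfour] at hinv
  have hzero : ∀ t, v t = 0 := by
    intro t
    rw [← hinv]
    simp [Real.fourierInv_eq]
  intro t
  have hvt := hzero t
  rw [hv] at hvt
  simp only [mul_eq_zero, Complex.exp_ne_zero, false_or, Complex.ofReal_eq_zero] at hvt
  exact hvt

lemma abs_entry_le_frobR {n : ℕ} (A : Matrix (Fin n) (Fin n) ℝ) (i j : Fin n) :
    |A i j| ≤ frobR A := by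
  rw [frobR, ← Real.sqrt_sq_eq_abs]
  apply Real.sqrt_le_sqrt
  calc A i j ^ 2 ≤ ∑ j', A i j' ^ 2 :=
        Finset.single_le_sum (f := fun j' => A i j' ^ 2)
          (fun _ _ => sq_nonneg _) (Finset.mem_univ j)
    _ ≤ ∑ i', ∑ j', A i' j' ^ 2 :=
        Finset.single_le_sum (f := fun i' => ∑ j', A i' j' ^ 2)
          (fun _ _ => Finset.sum_nonneg fun _ _ => sq_nonneg _) (Finset.mem_univ i)

end S15

end Statement15Aux

/-- With `f` the kernel of the representation theorem,
`C₀ := Iₙ − ∫_0^∞ f`, `C(t) := ∫_t^∞ f(u) du` and `C̃ := C₀ + C`, one has `C̃(0) = Iₙ`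
and `C̃(t) − C̃(s) = ∫_s^t (C̃ ∗ η)(u) du` for all `0 ≤ s < t`. -/
theorem statement15 {n : ℕ} (hn : 1 ≤ n) (δ : ℝ) (hδ : 0 < δ)
    (η : Matrix (Fin n) (Fin n) (SignedMeasure ℝ))
    (hsupp : SuppNonneg η) (hmom : ExpMoment δ η)
    (G : ℂ → Matrix (Fin n) (Fin n) ℂ) (hC : CondC δ η G)
    (f : ℝ → Matrix (Fin n) (Fin n) ℝ) (hf : FSpec δ G f)
    (Ct : ℝ → Matrix (Fin n) (Fin n) ℝ)
    (hCt : ∀ t, Ct t =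
      ((1 : Matrix (Fin n) (Fin n) ℝ) - Matrix.of fun i j => ∫ u in Set.Ici (0 : ℝ), f u i j)
        + Matrix.of fun i j => ∫ u in Set.Ioi t, f u i j) :
    Ct 0 = 1 ∧
    ∀ s t : ℝ, 0 ≤ s → s < t → ∀ i j,
      Ct t i j - Ct s i j =
        ∫ u in s..t, ∑ k, sIntOn (η k j) (Set.Icc 0 u) fun v => Ct (u - v) i k := by
    classical
  obtain ⟨hfmeas, hfneg, hfdecay, hflap⟩ := hf
  obtain ⟨M, hM⟩ := hfdecay (δ/2) (by positivity) (by linarith)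
  have hε : (0:ℝ) < δ/2 := by positivity
  have hM0 : 0 ≤ M :=
    le_trans (mul_nonneg (Real.exp_pos _).le (Real.sqrt_nonneg _)) (hM 0 le_rfl)
  -- entrywise bounds on f
  have hfb : ∀ (a b : Fin n) (τ : ℝ), 0 ≤ τ → |f τ a b| ≤ M * Real.exp (-(δ/2) * τ) := by
    intro a b τ hτ
    have h1 : |f τ a b| ≤ frobR (f τ) := S15.abs_entry_le_frobR _ _ _
    have h2 := hM τ hτ
    have key : frobR (f τ) = Real.exp (-(δ/2) * τ) * (Real.exp ((δ/2) * τ) * frobR (f τ)) := by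
      have hzero : -(δ/2) * τ + (δ/2) * τ = 0 := by ring
      rw [← mul_assoc, ← Real.exp_add, hzero, Real.exp_zero, one_mul]
    calc |f τ a b| ≤ frobR (f τ) := h1
      _ = Real.exp (-(δ/2) * τ) * (Real.exp ((δ/2) * τ) * frobR (f τ)) := key
      _ ≤ Real.exp (-(δ/2) * τ) * M := mul_le_mul_of_nonneg_left h2 (Real.exp_pos _).le
      _ = M * Real.exp (-(δ/2) * τ) := mul_comm _ _
  have hfbM : ∀ (a b : Fin n) (τ : ℝ), |f τ a b| ≤ M := by
    intro a b τ
    rcases lt_or_ge τ 0 with h | h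
    · rw [hfneg τ h]; simpa using hM0
    · refine le_trans (hfb a b τ h) ?_
      calc M * Real.exp (-(δ/2) * τ) ≤ M * 1 :=
            mul_le_mul_of_nonneg_left
              (Real.exp_le_one_iff.mpr (by nlinarith)) hM0
        _ = M := mul_one M
  have hfint : ∀ a b : Fin n, Integrable (fun τ => f τ a b) volume := by
    intro a b
    have h1 : IntegrableOn (fun τ => f τ a b) (Set.Iio 0) := by
      have heq : Set.EqOn (fun τ => f τ a b) 0 (Set.Iio 0) := fun τ hτ => by
        simp [hfneg τ hτ]
      exact (integrableOn_congr_fun heq measurableSet_Iio).mpr integrableOn_zero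
    have h2 : IntegrableOn (fun τ => f τ a b) (Set.Ioi 0) := by
      refine Integrable.mono' ((exp_neg_integrableOn_Ioi 0 hε).const_mul M)
        (hfmeas a b).aestronglyMeasurable ?_
      filter_upwards [ae_restrict_mem measurableSet_Ioi] with τ hτ
      rw [_root_.Real.norm_eq_abs]
      exact hfb a b τ (le_of_lt hτ)
    have h3 : IntegrableOn (fun τ => f τ a b) (Set.Ici 0) := by
      rwa [integrableOn_Ici_iff_integrableOn_Ioi]
    have h4 := h1.union h3
    rwa [Set.Iio_union_Ici, integrableOn_univ] at h4
  -- basic formula for Ct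
  have hCtEq : ∀ (τ : ℝ) (a b : Fin n),
      Ct τ a b = (1 : Matrix (Fin n) (Fin n) ℝ) a b - ∫ u in (0:ℝ)..τ, f u a b := by
    intro τ a b
    have key : (∫ u in Set.Ici (0:ℝ), f u a b) - (∫ u in Set.Ioi τ, f u a b) =
        ∫ u in (0:ℝ)..τ, f u a b := by
      rcases le_or_gt 0 τ with h | h
      · have hU : Set.Icc (0:ℝ) τ ∪ Set.Ioi τ = Set.Ici 0 := Set.Icc_union_Ioi_eq_Ici h
        have hdisj : Disjoint (Set.Icc (0:ℝ) τ) (Set.Ioi τ) :=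
          Set.disjoint_left.mpr fun x hx hx' => absurd hx.2 (not_le.mpr hx')
        rw [← hU, setIntegral_union hdisj measurableSet_Ioi
          ((hfint a b).integrableOn) ((hfint a b).integrableOn),
          intervalIntegral.integral_of_le h, ← MeasureTheory.integral_Icc_eq_integral_Ioc]
        ring
      · have h0 : ∫ u in Set.Ioc τ 0, f u a b = 0 :=
          S15.setInt_zero_of_neg _ (fun u hu => by simp [hfneg u hu]) measurableSet_Ioc
            (fun x hx => hx.2)
        have hU : Set.Ioc τ (0:ℝ) ∪ Set.Ioi 0 = Set.Ioi τ := Set.Ioc_union_Ioi_eq_Ioi h.le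
        have hdisj : Disjoint (Set.Ioc τ (0:ℝ)) (Set.Ioi 0) :=
          Set.disjoint_left.mpr fun x hx hx' => absurd hx.2 (not_le.mpr hx')
        rw [intervalIntegral.integral_of_ge h.le, h0, ← hU,
          setIntegral_union hdisj measurableSet_Ioi ((hfint a b).integrableOn)
            ((hfint a b).integrableOn), h0, MeasureTheory.integral_Ici_eq_integral_Ioi]
        ring
    rw [hCt τ]
    simp only [Matrix.add_apply, Matrix.sub_apply, Matrix.of_apply]
    linarith [key]
  have hCtCont : ∀ a b : Fin n, Continuous fun τ => Ct τ a b := by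
    intro a b
    have heq : (fun τ => Ct τ a b) =
        fun τ => (1 : Matrix (Fin n) (Fin n) ℝ) a b - ∫ u in (0:ℝ)..τ, f u a b :=
      funext fun τ => hCtEq τ a b
    rw [heq]
    exact continuous_const.sub ((hfint a b).continuous_primitive 0)
  refine ⟨?_, ?_⟩
  · ext a b
    rw [hCtEq 0 a b]
    simp
  intro s t hs hst i j
  have hz0δ : ∀ z : ℂ, 0 < z.re → -δ < z.re := fun z hz => by linarith
  have hzne : ∀ z : ℂ, 0 < z.re → z ≠ 0 := fun z hz h => by simp [h] at hz
  -- bounds for Ct entries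
  set KC : Fin n → ℝ := fun k => 1 + ∫ u, |f u i k| with hKCdef
  have hKC0 : ∀ k, 0 ≤ KC k := by
    intro k
    have h1 : 0 ≤ ∫ u, |f u i k| := integral_nonneg fun u => abs_nonneg _
    rw [hKCdef]
    simp only
    linarith
  have hprim : ∀ (k : Fin n) (τ : ℝ), |∫ u in (0:ℝ)..τ, f u i k| ≤ ∫ u, |f u i k| := by
    intro k τ
    have h3 := intervalIntegral.norm_integral_le_integral_norm_uIoc (a := (0:ℝ)) (b := τ)
      (f := fun u => f u i k) (μ := volume)
    rw [_root_.Real.norm_eq_abs] at h3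
    refine le_trans h3 ?_
    have h4 : ∫ u in Set.uIoc (0:ℝ) τ, ‖f u i k‖ ≤ ∫ u, ‖f u i k‖ :=
      setIntegral_le_integral ((hfint i k).norm) (ae_of_all _ fun u => norm_nonneg _)
    simpa [_root_.Real.norm_eq_abs] using h4
  have hCtb : ∀ (k : Fin n) (τ : ℝ), |Ct τ i k| ≤ KC k := by
    intro k τ
    rw [hCtEq τ i k]
    have h1 : |(1 : Matrix (Fin n) (Fin n) ℝ) i k| ≤ 1 := by
      rcases eq_or_ne i k with h | h <;> simp [Matrix.one_apply, h]
    calc |(1 : Matrix (Fin n) (Fin n) ℝ) i k - ∫ u in (0:ℝ)..τ, f u i k|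
        ≤ |(1 : Matrix (Fin n) (Fin n) ℝ) i k| + |∫ u in (0:ℝ)..τ, f u i k| := abs_sub _ _
      _ ≤ 1 + ∫ u, |f u i k| := add_le_add h1 (hprim k τ)
  -- the convolution function g
  set g : ℝ → ℝ := fun u => ∑ k, sIntOn (η k j) (Set.Icc 0 u) fun v => Ct (u - v) i k
    with hgdef
  have hgk : ∀ (k : Fin n) (u : ℝ),
      sIntOn (η k j) (Set.Icc 0 u) (fun v => Ct (u - v) i k) =
      (∫ v in Set.Icc (0:ℝ) u, Ct (u - v) i k ∂(η k j).toJordanDecomposition.posPart) -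
        ∫ v in Set.Icc (0:ℝ) u, Ct (u - v) i k ∂(η k j).toJordanDecomposition.negPart :=
    fun k u => rfl
  have hgmeas : Measurable g := by
    rw [hgdef]
    apply Finset.measurable_sum
    intro k _
    have h1 := S15.conv_measurable ((η k j).toJordanDecomposition.posPart)
      (fun τ => Ct τ i k) (hCtCont i k).measurable
    have h2 := S15.conv_measurable ((η k j).toJordanDecomposition.negPart)
      (fun τ => Ct τ i k) (hCtCont i k).measurable
    exact h1.sub h2
  have hconvb : ∀ (k : Fin n) (μ : Measure ℝ) [IsFiniteMeasure μ] (u : ℝ),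
      |∫ v in Set.Icc (0:ℝ) u, Ct (u - v) i k ∂μ| ≤ KC k * (μ Set.univ).toReal := by
    intro k μ hμfin u
    have h1 : ‖∫ v in Set.Icc (0:ℝ) u, Ct (u - v) i k ∂μ‖ ≤ KC k * (μ (Set.Icc 0 u)).toReal :=
      norm_setIntegral_le_of_norm_le_const (measure_lt_top μ _)
        (fun v _ => le_trans (le_of_eq (_root_.Real.norm_eq_abs _)) (hCtb k (u - v)))
    rw [_root_.Real.norm_eq_abs] at h1
    refine le_trans h1 (mul_le_mul_of_nonneg_left ?_ (hKC0 k))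
    exact ENNReal.toReal_mono (measure_ne_top μ _) (measure_mono (Set.subset_univ _))
  set Kg : ℝ := ∑ k, KC k * ((((η k j).toJordanDecomposition.posPart) Set.univ).toReal +
    (((η k j).toJordanDecomposition.negPart) Set.univ).toReal) with hKgdef
  have hgb : ∀ u, |g u| ≤ Kg := by
    intro u
    rw [hgdef]
    refine le_trans (Finset.abs_sum_le_sum_abs _ _) ?_
    rw [hKgdef]
    apply Finset.sum_le_sum
    intro k _
    rw [hgk]
    refine le_trans (abs_sub _ _) ?_
    rw [mul_add]
    exact add_le_add (hconvb k _ u) (hconvb k _ u)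
  have hgneg : ∀ u : ℝ, u < 0 → g u = 0 := by
    intro u hu
    rw [hgdef]
    apply Finset.sum_eq_zero
    intro k _
    rw [hgk, Set.Icc_eq_empty (not_le.mpr hu)]
    simp
  -- the combined function w and its primitive F
  set w : ℝ → ℝ := fun u => f u i j + g u with hwdef
  have hwmeas : Measurable w := (hfmeas i j).add hgmeas
  have hwneg : ∀ u : ℝ, u < 0 → w u = 0 := fun u hu => by
    rw [hwdef]; simp [hgneg u hu, hfneg u hu]
  have hwb : ∀ u, |w u| ≤ M + Kg := fun u =>
    le_trans (abs_add_le _ _) (add_le_add (hfbM i j u) (hgb u))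
  have hKg0 : 0 ≤ Kg := le_trans (abs_nonneg _) (hgb 0)
  have hMKg0 : 0 ≤ M + Kg := by linarith
  have hwII : ∀ a b : ℝ, IntervalIntegrable w volume a b := by
    intro a b
    rw [intervalIntegrable_iff]
    refine Integrable.mono' (g := fun _ => M + Kg)
      (integrableOn_const measure_Ioc_lt_top.ne)
      hwmeas.aestronglyMeasurable (ae_of_all _ fun u => ?_)
    rw [_root_.Real.norm_eq_abs]; exact hwb u
  set F : ℝ → ℝ := fun τ => ∫ u in (0:ℝ)..τ, w u with hFdef
  have hFcont : Continuous F := intervalIntegral.continuous_primitive hwII 0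
  have hF0 : ∀ τ ≤ (0:ℝ), F τ = 0 := by
    intro τ hτ
    rw [hFdef]
    simp only
    rw [intervalIntegral.integral_of_ge hτ,
      S15.setInt_zero_of_neg w hwneg measurableSet_Ioc (fun x hx => hx.2), neg_zero]
  have hFb : ∀ τ, 0 ≤ τ → |F τ| ≤ (M + Kg) * τ := by
    intro τ hτ
    rw [hFdef]
    simp only
    rw [intervalIntegral.integral_of_le hτ]
    have h1 := norm_setIntegral_le_of_norm_le_const (μ := volume) (s := Set.Ioc 0 τ)
      measure_Ioc_lt_top (C := M + Kg)
      (fun u _ => by rw [_root_.Real.norm_eq_abs]; exact hwb u)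
    rw [_root_.Real.norm_eq_abs, Measure.real, Real.volume_Ioc] at h1
    have h2 : (ENNReal.ofReal (τ - 0)).toReal = τ := by
      rw [ENNReal.toReal_ofReal (by linarith)]; ring
    rwa [h2] at h1
  -- vanishing of the Laplace transform of F
  have hlapF : ∀ z : ℂ, 0 < z.re →
      ∫ τ in Set.Ioi (0:ℝ), Complex.exp (-z * τ) * (F τ : ℂ) = 0 := by
    intro z hz
    have hz0 : z ≠ 0 := hzne z hz
    have hLf : ∀ a b : Fin n,
        ∫ u in Set.Ioi (0:ℝ), Complex.exp (-z * u) * (f u a b : ℂ) =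
          ((1 : Matrix (Fin n) (Fin n) ℂ) - G z) a b := by
      intro a b
      rw [← MeasureTheory.integral_Ici_eq_integral_Ioi]
      exact hflap z (hz0δ z hz) a b
    set H : Matrix (Fin n) (Fin n) ℂ := (hEta η z)⁻¹ with hHdef
    have hdet : (hEta η z).det ≠ 0 := hC.1 z (hz0δ z hz) hz0
    have hHmul : H * hEta η z = 1 := Matrix.nonsing_inv_mul _ (isUnit_iff_ne_zero.mpr hdet)
    have hGz : G z = z • H := hC.2.2 z (hz0δ z hz) hz0
    -- Laplace transform of the entries of Ct
    have hPhi : ∀ k : Fin n,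
        ∫ τ in Set.Ioi (0:ℝ), Complex.exp (-z * τ) * (Ct τ i k : ℂ) = H i k := by
      intro k
      have hsplit : ∀ τ : ℝ, Complex.exp (-z * τ) * (Ct τ i k : ℂ) =
          Complex.exp (-z * τ) * ((1 : Matrix (Fin n) (Fin n) ℝ) i k : ℂ) -
            Complex.exp (-z * τ) * (((∫ u in (0:ℝ)..τ, f u i k) : ℝ) : ℂ) := by
        intro τ
        rw [hCtEq τ i k]
        push_cast
        ring
      have hint1 : IntegrableOn (fun τ : ℝ =>
          Complex.exp (-z * τ) * ((1 : Matrix (Fin n) (Fin n) ℝ) i k : ℂ)) (Set.Ioi 0) :=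
        (S15.cexpIntOn z hz 0).mul_const _
      have hint2 : IntegrableOn (fun τ : ℝ =>
          Complex.exp (-z * τ) * (((∫ u in (0:ℝ)..τ, f u i k) : ℝ) : ℂ)) (Set.Ioi 0) := by
        refine S15.int_cexp_mul z hz _ ?_ (∫ u, |f u i k|) ?_
        · exact (Complex.continuous_ofReal.comp
            ((hfint i k).continuous_primitive 0)).aestronglyMeasurable
        · intro u
          rw [Complex.norm_real, _root_.Real.norm_eq_abs]
          exact hprim k u
      rw [integral_congr_ae (ae_of_all _ hsplit), integral_sub hint1 hint2]
      have ht1 : ∫ τ in Set.Ioi (0:ℝ),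
          Complex.exp (-z * τ) * ((1 : Matrix (Fin n) (Fin n) ℝ) i k : ℂ)
          = ((1 : Matrix (Fin n) (Fin n) ℂ) i k) * z⁻¹ := by
        rw [MeasureTheory.integral_mul_const, S15.integral_cexp_Ioi z hz 0]
        have hone : ((1 : Matrix (Fin n) (Fin n) ℝ) i k : ℂ) =
            (1 : Matrix (Fin n) (Fin n) ℂ) i k := by
          rcases eq_or_ne i k with h | h <;> simp [Matrix.one_apply, h]
        rw [hone]
        simp [div_eq_mul_inv, mul_comm]
      have ht2 : ∫ τ in Set.Ioi (0:ℝ),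
          Complex.exp (-z * τ) * (((∫ u in (0:ℝ)..τ, f u i k) : ℝ) : ℂ)
          = z⁻¹ * (((1 : Matrix (Fin n) (Fin n) ℂ) - G z) i k) := by
        have heq : ∀ᵐ (τ : ℝ) ∂(volume.restrict (Set.Ioi (0:ℝ))),
            Complex.exp (-z * τ) * (((∫ u in (0:ℝ)..τ, f u i k) : ℝ) : ℂ) =
              Complex.exp (-z * τ) * (∫ u in Set.Ioc (0:ℝ) τ, ((f u i k : ℝ) : ℂ)) := by
          filter_upwards [ae_restrict_mem measurableSet_Ioi] with τ hτ
          rw [intervalIntegral.integral_of_le (le_of_lt hτ)]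
          exact congrArg (fun q => Complex.exp (-z * τ) * q) integral_ofReal.symm
        rw [integral_congr_ae heq, S15.laplace_primitive z hz (fun u => ((f u i k : ℝ) : ℂ))
          (Complex.measurable_ofReal.comp (hfmeas i k)) M
          (fun u => by rw [Complex.norm_real, _root_.Real.norm_eq_abs]; exact hfbM i k u),
          hLf i k]
      rw [ht1, ht2, hGz]
      rw [Matrix.sub_apply, Matrix.smul_apply, smul_eq_mul]
      field_simp
      ring
    -- Laplace transform of g
    have hconvLap : ∀ (k : Fin n) (μ : Measure ℝ) [IsFiniteMeasure μ],
        ∫ u in Set.Ioi (0:ℝ), Complex.exp (-z * u) *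
          (((∫ v in Set.Icc (0:ℝ) u, Ct (u - v) i k ∂μ) : ℝ) : ℂ) =
        H i k * ∫ v in Set.Ici (0:ℝ), Complex.exp (-z * v) ∂μ := by
      intro k μ _
      have heq : ∀ u : ℝ, Complex.exp (-z * u) *
          (((∫ v in Set.Icc (0:ℝ) u, Ct (u - v) i k ∂μ) : ℝ) : ℂ)
          = Complex.exp (-z * u) *
            (∫ v in Set.Icc (0:ℝ) u, ((Ct (u - v) i k : ℝ) : ℂ) ∂μ) := by
        intro u
        exact congrArg (fun q => Complex.exp (-z * u) * q) integral_ofReal.symm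
      rw [integral_congr_ae (ae_of_all _ heq),
        S15.laplace_conv z hz μ (fun τ => ((Ct τ i k : ℝ) : ℂ))
          (Complex.measurable_ofReal.comp (hCtCont i k).measurable) (KC k)
          (fun τ => by rw [Complex.norm_real, _root_.Real.norm_eq_abs]; exact hCtb k τ),
        hPhi k]
    have hintp : ∀ (k : Fin n) (μ : Measure ℝ) [IsFiniteMeasure μ],
        IntegrableOn (fun u : ℝ => Complex.exp (-z * u) *
          (((∫ v in Set.Icc (0:ℝ) u, Ct (u - v) i k ∂μ) : ℝ) : ℂ)) (Set.Ioi 0) := by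
      intro k μ _
      refine S15.int_cexp_mul z hz _ ?_ (KC k * (μ Set.univ).toReal) ?_
      · exact (Complex.measurable_ofReal.comp
          (S15.conv_measurable μ _ (hCtCont i k).measurable)).aestronglyMeasurable
      · intro u
        rw [Complex.norm_real, _root_.Real.norm_eq_abs]
        exact hconvb k μ u
    have hsum : ∀ u : ℝ, Complex.exp (-z * u) * (g u : ℂ) =
        ∑ k, (Complex.exp (-z * u) *
            (((∫ v in Set.Icc (0:ℝ) u, Ct (u - v) i k
              ∂(η k j).toJordanDecomposition.posPart) : ℝ) : ℂ) -
          Complex.exp (-z * u) *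
            (((∫ v in Set.Icc (0:ℝ) u, Ct (u - v) i k
              ∂(η k j).toJordanDecomposition.negPart) : ℝ) : ℂ)) := by
      intro u
      rw [hgdef]
      simp only [hgk]
      push_cast
      rw [Finset.mul_sum]
      exact Finset.sum_congr rfl fun k _ => mul_sub _ _ _
    have hLg : ∫ u in Set.Ioi (0:ℝ), Complex.exp (-z * u) * (g u : ℂ) =
        ∑ k, H i k * lapM η z k j := by
      have hintk : ∀ k : Fin n, IntegrableOn (fun u : ℝ =>
          Complex.exp (-z * u) * (((∫ v in Set.Icc (0:ℝ) u, Ct (u - v) i k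
            ∂(η k j).toJordanDecomposition.posPart) : ℝ) : ℂ) -
          Complex.exp (-z * u) * (((∫ v in Set.Icc (0:ℝ) u, Ct (u - v) i k
            ∂(η k j).toJordanDecomposition.negPart) : ℝ) : ℂ)) (Set.Ioi 0) :=
        fun k => (hintp k _).sub (hintp k _)
      rw [integral_congr_ae (ae_of_all _ hsum),
        integral_finset_sum _ (fun k _ => hintk k)]
      refine Finset.sum_congr rfl fun k _ => ?_
      rw [integral_sub (hintp k _) (hintp k _), hconvLap k _, hconvLap k _, ← mul_sub]
      rfl
    -- the Laplace transform of w vanishes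
    have hW : ∫ u in Set.Ioi (0:ℝ), Complex.exp (-z * u) * (w u : ℂ) = 0 := by
      have hsplitw : ∀ u : ℝ, Complex.exp (-z * u) * (w u : ℂ) =
          Complex.exp (-z * u) * (f u i j : ℂ) + Complex.exp (-z * u) * (g u : ℂ) := by
        intro u; rw [hwdef]; push_cast; ring
      have hif : IntegrableOn (fun u : ℝ => Complex.exp (-z * u) * (f u i j : ℂ))
          (Set.Ioi 0) :=
        S15.int_cexp_mul z hz _ (Complex.measurable_ofReal.comp (hfmeas i j)).aestronglyMeasurable
          M (fun u => by rw [Complex.norm_real, _root_.Real.norm_eq_abs]; exact hfbM i j u)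
      have hig : IntegrableOn (fun u : ℝ => Complex.exp (-z * u) * (g u : ℂ)) (Set.Ioi 0) :=
        S15.int_cexp_mul z hz _ (Complex.measurable_ofReal.comp hgmeas).aestronglyMeasurable
          Kg (fun u => by rw [Complex.norm_real, _root_.Real.norm_eq_abs]; exact hgb u)
      rw [integral_congr_ae (ae_of_all _ hsplitw), integral_add hif hig, hLf i j, hLg]
      have h1 : (∑ k, H i k * lapM η z k j) = (H * lapM η z) i j := (Matrix.mul_apply).symm
      have h2 : H * lapM η z = z • H - 1 := by
        have h3 : H * (z • (1 : Matrix (Fin n) (Fin n) ℂ) - lapM η z) = 1 := hHmul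
        rw [Matrix.mul_sub] at h3
        have h5 : H * (z • (1 : Matrix (Fin n) (Fin n) ℂ)) = z • H := by
          rw [Matrix.mul_smul, Matrix.mul_one]
        rw [h5] at h3
        rw [← h3]
        abel
      rw [h1, h2, hGz]
      simp only [Matrix.sub_apply, Matrix.add_apply]
      ring
    have heqF : ∀ᵐ (τ : ℝ) ∂(volume.restrict (Set.Ioi (0:ℝ))),
        Complex.exp (-z * τ) * (F τ : ℂ) =
          Complex.exp (-z * τ) * ∫ u in Set.Ioc (0:ℝ) τ, ((w u : ℝ) : ℂ) := by
      filter_upwards [ae_restrict_mem measurableSet_Ioi] with τ hτ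
      rw [hFdef]
      simp only
      rw [intervalIntegral.integral_of_le (le_of_lt hτ)]
      exact congrArg (fun q => Complex.exp (-z * τ) * q) integral_ofReal.symm
    rw [integral_congr_ae heqF, S15.laplace_primitive z hz (fun u => ((w u : ℝ) : ℂ))
      (Complex.measurable_ofReal.comp hwmeas) (M + Kg)
      (fun u => by rw [Complex.norm_real, _root_.Real.norm_eq_abs]; exact hwb u), hW, mul_zero]
  -- uniqueness: F ≡ 0
  have hFzero : ∀ τ, F τ = 0 := S15.laplace_uniq F hFcont hF0 (M + Kg) hFb hlapF
  have hFzero' : ∀ τ : ℝ, ∫ u in (0:ℝ)..τ, w u = 0 := by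
    intro τ
    have h := hFzero τ
    rw [hFdef] at h
    simpa using h
  -- conclusion
  have hst0 : ∫ u in s..t, w u = 0 := by
    have h := intervalIntegral.integral_interval_sub_left (hwII 0 t) (hwII 0 s)
    rw [hFzero' t, hFzero' s, sub_zero] at h
    rw [← h]
  have hgII : ∀ a b : ℝ, IntervalIntegrable g volume a b := by
    intro a b
    rw [intervalIntegrable_iff]
    refine Integrable.mono' (g := fun _ => Kg)
      (integrableOn_const measure_Ioc_lt_top.ne)
      hgmeas.aestronglyMeasurable (ae_of_all _ fun u => ?_)
    rw [_root_.Real.norm_eq_abs]; exact hgb u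
  have hsplit2 : ∫ u in s..t, w u = (∫ u in s..t, f u i j) + ∫ u in s..t, g u := by
    rw [hwdef]
    exact intervalIntegral.integral_add ((hfint i j).intervalIntegrable) (hgII s t)
  have hLHS : Ct t i j - Ct s i j = -(∫ u in s..t, f u i j) := by
    rw [hCtEq t i j, hCtEq s i j]
    have h := intervalIntegral.integral_interval_sub_left
      ((hfint i j).intervalIntegrable (a := 0) (b := t))
      ((hfint i j).intervalIntegrable (a := 0) (b := s))
    linarith [h]
  have hRHS : (∫ u in s..t, ∑ k, sIntOn (η k j) (Set.Icc 0 u) fun v => Ct (u - v) i k)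
      = ∫ u in s..t, g u := by rw [hgdef]
  rw [hLHS, hRHS]
  have hzero2 : (∫ u in s..t, f u i j) + ∫ u in s..t, g u = 0 := by
    rw [← hsplit2, hst0]
  linarith [hzero2]
end
end
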